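/- arXiv:cs/0601128 — 6 statements merged into one kernel-verified Lean document; each statement's English description precedes it below -/
import Mathlib

section
/- Let M : Fin (n+1) → EuclideanSpace ℝ (Fin 2) be a tame sequence and let δ be a positive integer such that for all indices 0 ≤ i < j < k ≤ n one has Area(M i, M j, M k) ≥ (j−i)(k−j)/(2δ) (i.e., δ ≥ Δ₃(M)). If ⌊n/δ⌋ ≥ 3, then the subsequence (M 0, M δ, M (2δ), …, M (⌊n/δ⌋·δ)) is a convex sequence. (Lemma 2.) -/
noncomputable def triArea {d : ℕ} (A B C : EuclideanSpace ℝ (Fin d)) : ℝ :=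
  (1 / 2) * Real.sqrt (‖B - A‖ ^ 2 * ‖C - A‖ ^ 2 - (inner ℝ (B - A) (C - A) : ℝ) ^ 2)

def Tame {d n : ℕ} (M : Fin (n + 1) → EuclideanSpace ℝ (Fin d)) : Prop :=
  ∀ i : Fin n, dist (M i.castSucc) (M i.succ) ≤ 1

/-- A finite cyclic sequence of points in the plane is convex: the points are pairwise
distinct and, for each edge `P i P (i+1)`, all the other points lie strictly on one and
the same open side of the line through `P i` and `P (i+1)`. -/
def ConvexSeq {m : ℕ} [NeZero m] (P : Fin m → EuclideanSpace ℝ (Fin 2)) : Prop :=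
  Function.Injective P ∧
    ∀ i j k : Fin m, j ≠ i → j ≠ i + 1 → k ≠ i → k ≠ i + 1 →
      (affineSpan ℝ {P i, P (i + 1)}).SSameSide (P j) (P k)

namespace Stmt5Aux

abbrev E2 := EuclideanSpace ℝ (Fin 2)
def cross (u v : E2) : ℝ := u 0 * v 1 - u 1 * v 0
def rot (u : E2) : E2 := WithLp.toLp 2 ![-(u 1), u 0]

lemma rot0 (u : E2) : rot u 0 = -(u 1) := rfl
lemma rot1 (u : E2) : rot u 1 = u 0 := rfl

lemma inner_two (u v : E2) : (inner ℝ u v : ℝ) = u 0 * v 0 + u 1 * v 1 := by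
  simp [PiLp.inner_apply, Fin.sum_univ_two]; ring
lemma norm_sq_two (u : E2) : ‖u‖ ^ 2 = u 0 ^ 2 + u 1 ^ 2 := by
  rw [← real_inner_self_eq_norm_sq, inner_two]; ring

lemma cross_cyclic (A B C : E2) : cross (B - A) (C - A) = cross (C - B) (A - B) := by
  simp only [cross, PiLp.sub_apply]; ring

lemma cross_swap (u v : E2) : cross u v = -cross v u := by
  simp only [cross]; ring

lemma cross_zero_left (v : E2) : cross 0 v = 0 := by
  simp [cross]

lemma cross_zero_right (v : E2) : cross v 0 = 0 := by
  simp [cross]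

lemma cross_self (u : E2) : cross u u = 0 := by
  simp only [cross]; ring

lemma abs_cross_le (u v : E2) : |cross u v| ≤ ‖u‖ * ‖v‖ := by
  have h1 : cross u v ^ 2 ≤ (‖u‖ * ‖v‖) ^ 2 := by
    rw [mul_pow, norm_sq_two, norm_sq_two, cross]
    nlinarith [sq_nonneg (u 0 * v 0 + u 1 * v 1)]
  have h2 : (0:ℝ) ≤ ‖u‖ * ‖v‖ := by positivity
  rcases abs_cases (cross u v) with ⟨h, _⟩ | ⟨h, _⟩ <;> nlinarith

lemma cross_sub (u x y a : E2) : cross u (x - a) - cross u (y - a) = cross u (x - y) := by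
  simp only [cross, PiLp.sub_apply]; ring

lemma cross_lipschitz (u x y a : E2) :
    |cross u (x - a) - cross u (y - a)| ≤ ‖u‖ * dist x y := by
  rw [cross_sub, dist_eq_norm]; exact abs_cross_le u (x - y)

lemma triArea_eq (A B C : E2) : triArea A B C = |cross (B - A) (C - A)| / 2 := by
  rw [triArea, norm_sq_two, norm_sq_two, inner_two,
    show ((B-A) 0 ^2 + (B-A) 1 ^2) * ((C-A) 0 ^2 + (C-A) 1^2)
      - ((B-A) 0 * (C-A) 0 + (B-A) 1 * (C-A) 1)^2 = cross (B-A) (C-A) ^ 2 by rw [cross]; ring,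
    Real.sqrt_sq_eq_abs]
  ring

lemma mem_span_cross {A B X : E2} (h : X ∈ affineSpan ℝ ({A, B} : Set E2)) :
    cross (B - A) (X - A) = 0 := by
  have hA : A ∈ affineSpan ℝ ({A, B} : Set E2) :=
    subset_affineSpan ℝ _ (Set.mem_insert _ _)
  have hd := AffineSubspace.vsub_mem_direction h hA
  rw [direction_affineSpan, vectorSpan_pair] at hd
  obtain ⟨t, ht⟩ := Submodule.mem_span_singleton.mp hd
  have : X - A = t • (A - B) := by
    rw [show X - A = X -ᵥ A from rfl, ← ht, show A - B = A -ᵥ B from rfl]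
  rw [this]
  simp only [cross, PiLp.smul_apply, PiLp.sub_apply, smul_eq_mul]; ring

lemma decomp (A B X : E2) (h : B ≠ A) :
    X - (A + ((inner ℝ (X - A) (B - A) : ℝ) / ‖B - A‖ ^ 2) • (B - A))
      = (cross (B - A) (X - A) / ‖B - A‖ ^ 2) • rot (B - A) := by
  have hL : ‖B - A‖ ^ 2 ≠ 0 :=
    pow_ne_zero 2 (norm_ne_zero_iff.mpr (sub_ne_zero_of_ne h))
  have hL2 : (B 0 - A 0) ^ 2 + (B 1 - A 1) ^ 2 ≠ 0 := by
    have := hL; rw [norm_sq_two] at this; simpa using this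
  ext i
  rcases (by decide : ∀ j : Fin 2, j = 0 ∨ j = 1) i with rfl | rfl <;>
  · simp only [PiLp.add_apply, PiLp.smul_apply, PiLp.sub_apply, smul_eq_mul, rot0, rot1,
      inner_two, norm_sq_two, cross]
    field_simp
    ring

lemma ssameside_of_cross {A B X Y : E2}
    (h : 0 < cross (B - A) (X - A) * cross (B - A) (Y - A)) :
    (affineSpan ℝ ({A, B} : Set E2)).SSameSide X Y := by
  set cX := cross (B - A) (X - A) with hcX
  set cY := cross (B - A) (Y - A) with hcY
  have hBA : B ≠ A := by
    rintro rfl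
    simp only [sub_self, cross, PiLp.zero_apply, zero_mul, mul_zero, sub_zero] at hcX
    rw [hcX] at h; simp at h
  have hL : (0:ℝ) < ‖B - A‖ ^ 2 :=
    pow_pos (norm_pos_iff.mpr (sub_ne_zero_of_ne hBA)) 2
  have hXne : cX ≠ 0 := by rintro h0; rw [h0] at h; simp at h
  have hYne : cY ≠ 0 := by rintro h0; rw [h0] at h; simp at h
  refine ⟨?_, ?_, ?_⟩
  · set tX : ℝ := (inner ℝ (X - A) (B - A) : ℝ) / ‖B - A‖ ^ 2
    set tY : ℝ := (inner ℝ (Y - A) (B - A) : ℝ) / ‖B - A‖ ^ 2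
    refine ⟨AffineMap.lineMap A B tX, AffineMap.lineMap_mem_affineSpan_pair _ _ _,
            AffineMap.lineMap A B tY, AffineMap.lineMap_mem_affineSpan_pair _ _ _, ?_⟩
    have eX : X -ᵥ AffineMap.lineMap A B tX = (cX / ‖B - A‖ ^ 2) • rot (B - A) := by
      rw [AffineMap.lineMap_apply]
      show X - (tX • (B - A) + A) = _
      rw [add_comm (tX • (B - A)) A]
      exact decomp A B X hBA
    have eY : Y -ᵥ AffineMap.lineMap A B tY = (cY / ‖B - A‖ ^ 2) • rot (B - A) := by
      rw [AffineMap.lineMap_apply]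
      show Y - (tY • (B - A) + A) = _
      rw [add_comm (tY • (B - A)) A]
      exact decomp A B Y hBA
    rw [eX, eY]
    rcases mul_pos_iff.mp h with ⟨hx, hy⟩ | ⟨hx, hy⟩
    · exact Or.inr (Or.inr ⟨cY / ‖B - A‖ ^ 2, cX / ‖B - A‖ ^ 2,
        div_pos hy hL, div_pos hx hL, by rw [smul_smul, smul_smul]; ring_nf⟩)
    · exact Or.inr (Or.inr ⟨-(cY / ‖B - A‖ ^ 2), -(cX / ‖B - A‖ ^ 2),
        by rw [← neg_div]; exact div_pos (by linarith) hL,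
        by rw [← neg_div]; exact div_pos (by linarith) hL,
        by rw [neg_smul, neg_smul, smul_smul, smul_smul]; ring_nf⟩)
  · intro hmem; exact hXne (mem_span_cross hmem)
  · intro hmem; exact hYne (mem_span_cross hmem)

lemma pos_trans {a b c : ℝ} (h1 : 0 < a * b) (h2 : 0 < b * c) : 0 < a * c := by
  have hb : b ≠ 0 := by rintro rfl; simp at h1
  have hb2 : 0 < b * b := mul_self_pos.mpr hb
  nlinarith [mul_pos h1 h2]

def Pt (n : ℕ) (M : Fin (n+1) → E2) (t : ℕ) : E2 := M ⟨min t n, by omega⟩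

lemma Pt_eq (n : ℕ) (M : Fin (n+1) → E2) (t : ℕ) (h : t ≤ n) (h2 : t < n + 1) :
    Pt n M t = M ⟨t, h2⟩ := by
  have e : (⟨min t n, by omega⟩ : Fin (n+1)) = ⟨t, h2⟩ := by
    apply Fin.ext
    simp [min_eq_left h]
  unfold Pt
  rw [e]

variable {n : ℕ} {M : Fin (n+1) → E2}

lemma tame_dist (hM : Tame M) : ∀ k s, s + k ≤ n →
    dist (Pt n M s) (Pt n M (s + k)) ≤ (k : ℝ) := by
  intro k
  induction k with
  | zero => intro s h; simp
  | succ k ih =>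
    intro s h
    have h1 := ih s (by omega)
    have h2 : dist (Pt n M (s + k)) (Pt n M (s + (k+1))) ≤ 1 := by
      have h3 := hM ⟨s + k, by omega⟩
      have e1 : Pt n M (s + k) = M (⟨s + k, by omega⟩ : Fin n).castSucc :=
        Pt_eq n M _ (by omega) _
      have e2 : Pt n M (s + (k+1)) = M (⟨s + k, by omega⟩ : Fin n).succ :=
        Pt_eq n M _ (by omega) _
      rw [e1, e2]; exact h3
    calc dist (Pt n M s) (Pt n M (s + (k+1)))
        ≤ dist (Pt n M s) (Pt n M (s + k)) + dist (Pt n M (s + k)) (Pt n M (s + (k+1))) :=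
          dist_triangle _ _ _
      _ ≤ (k : ℝ) + 1 := add_le_add h1 h2
      _ = ((k + 1 : ℕ) : ℝ) := by push_cast; ring

lemma signconst (hM : Tame M) (A B : E2) :
    ∀ k t₀, t₀ + k ≤ n →
    (∀ t, t₀ ≤ t → t ≤ t₀ + k → ‖B - A‖ < 2 * |cross (B - A) (Pt n M t - A)|) →
    0 < cross (B - A) (Pt n M t₀ - A) * cross (B - A) (Pt n M (t₀ + k) - A) := by
  intro k
  induction k with
  | zero =>
    intro t₀ hle hbig
    have h1 := hbig t₀ le_rfl (by omega)
    have hne : cross (B - A) (Pt n M t₀ - A) ≠ 0 := by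
      intro h0; rw [h0] at h1; simp at h1
      exact absurd h1 (not_lt.mpr (norm_nonneg _))
    simpa using mul_self_pos.mpr hne
  | succ k ih =>
    intro t₀ hle hbig
    have hprev := ih t₀ (by omega) (fun t h1 h2 => hbig t h1 (by omega))
    set a := cross (B - A) (Pt n M (t₀ + k) - A) with ha
    set b := cross (B - A) (Pt n M (t₀ + (k+1)) - A) with hb
    have hA : ‖B - A‖ < 2 * |a| := hbig (t₀ + k) (by omega) (by omega)
    have hB : ‖B - A‖ < 2 * |b| := hbig (t₀ + (k+1)) (by omega) (by omega)
    have hdist : dist (Pt n M (t₀ + k)) (Pt n M (t₀ + (k+1))) ≤ 1 := by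
      have := tame_dist hM 1 (t₀ + k) (by omega)
      simpa [add_assoc] using this
    have hlip : |a - b| ≤ ‖B - A‖ := by
      have h1 := cross_lipschitz (B - A) (Pt n M (t₀ + k)) (Pt n M (t₀ + (k+1))) A
      have h2 : ‖B - A‖ * dist (Pt n M (t₀ + k)) (Pt n M (t₀ + (k+1))) ≤ ‖B - A‖ * 1 :=
        mul_le_mul_of_nonneg_left hdist (norm_nonneg _)
      rw [mul_one] at h2
      exact le_trans h1 h2
    have hane : a ≠ 0 := by
      intro h0; rw [h0] at hA; simp at hA
      exact absurd hA (not_lt.mpr (norm_nonneg _))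
    have hbne : b ≠ 0 := by
      intro h0; rw [h0] at hB; simp at hB
      exact absurd hB (not_lt.mpr (norm_nonneg _))
    have habs := abs_le.mp hlip
    have hstep : 0 < a * b := by
      rcases lt_or_gt_of_ne hane with ha0 | ha0 <;> rcases lt_or_gt_of_ne hbne with hb0 | hb0
      · exact mul_pos_of_neg_of_neg ha0 hb0
      · exfalso
        rw [abs_of_neg ha0] at hA
        rw [abs_of_pos hb0] at hB
        linarith [habs.1]
      · exfalso
        rw [abs_of_pos ha0] at hA
        rw [abs_of_neg hb0] at hB
        linarith [habs.2]
      · exact mul_pos ha0 hb0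
    exact pos_trans hprev hstep

noncomputable def chi (n : ℕ) (M : Fin (n+1) → E2) (δ x y z : ℕ) : ℝ :=
  cross (Pt n M (y*δ) - Pt n M (x*δ)) (Pt n M (z*δ) - Pt n M (x*δ))

lemma F1 {δ : ℕ} (hδ : 0 < δ) (hM : Tame M)
    (hlb : ∀ s t u : ℕ, s < t → t < u → u ≤ n →
      ((t - s : ℕ) : ℝ) * ((u - t : ℕ) : ℝ) / (δ : ℝ)
        ≤ |cross (Pt n M t - Pt n M s) (Pt n M u - Pt n M s)|)
    (x y z z' : ℕ) (hxy : x < y) (hyz : y < z) (hzz : z ≤ z') (hz' : z' * δ ≤ n) :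
    0 < chi n M δ x y z * chi n M δ x y z' := by
  have hmul : ∀ {p q : ℕ}, p ≤ q → p * δ ≤ q * δ := fun h => Nat.mul_le_mul_right δ h
  have hdR : (0:ℝ) < (δ:ℝ) := by exact_mod_cast hδ
  have key := signconst hM (Pt n M (x*δ)) (Pt n M (y*δ)) (z'*δ - z*δ) (z*δ)
    (by have := hmul hzz; omega) ?hbig
  case hbig =>
    intro t ht1 ht2
    have hz'd := hmul hzz
    have htn : t ≤ n := by omega
    have hyd_t : y*δ < t := by
      have h1 : (y+1) * δ ≤ z * δ := hmul hyz
      have h2 : (y+1)*δ = y*δ + δ := by ring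
      omega
    have hxyd : x*δ < y*δ := by
      have h1 : (x+1) * δ ≤ y * δ := hmul hxy
      have h2 : (x+1)*δ = x*δ + δ := by ring
      omega
    have hL : ‖Pt n M (y*δ) - Pt n M (x*δ)‖ ≤ ((y - x : ℕ) : ℝ) * δ := by
      have h1 := tame_dist hM (y*δ - x*δ) (x*δ) (by omega)
      have e : x*δ + (y*δ - x*δ) = y*δ := by omega
      rw [e] at h1
      rw [← dist_eq_norm, dist_comm]
      calc dist (Pt n M (x*δ)) (Pt n M (y*δ)) ≤ ((y*δ - x*δ : ℕ) : ℝ) := h1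
        _ = ((y - x : ℕ) : ℝ) * δ := by
            rw [show y*δ - x*δ = (y-x)*δ from by rw [Nat.sub_mul]]; push_cast; ring
    have hlow := hlb (x*δ) (y*δ) t hxyd hyd_t htn
    have hK : (0:ℝ) < ((y - x : ℕ) : ℝ) * δ := by
      have : 0 < (y - x) * δ := Nat.mul_pos (by omega) hδ
      calc (0:ℝ) < (((y-x)*δ : ℕ) : ℝ) := by exact_mod_cast this
        _ = ((y - x : ℕ) : ℝ) * δ := by push_cast; ring
    have h2 : ((y - x : ℕ) : ℝ) * δ ≤ ((y*δ - x*δ : ℕ):ℝ) * ((t - y*δ : ℕ):ℝ) / δ := by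
      rw [le_div_iff₀ hdR]
      have hnb : δ ≤ t - y*δ := by
        have h1 : (y+1) * δ ≤ z * δ := hmul hyz
        have h2 : (y+1)*δ = y*δ + δ := by ring
        omega
      have hnn : (y-x) * δ * δ ≤ (y*δ - x*δ) * (t - y*δ) := by
        rw [show y*δ - x*δ = (y-x)*δ from by rw [Nat.sub_mul]]
        exact Nat.mul_le_mul le_rfl hnb
      calc ((y - x : ℕ):ℝ) * (δ:ℝ) * (δ:ℝ) = (((y-x) * δ * δ : ℕ) : ℝ) := by push_cast; ring
        _ ≤ (((y*δ - x*δ) * (t - y*δ) : ℕ) : ℝ) := by exact_mod_cast hnn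
        _ = ((y*δ - x*δ : ℕ):ℝ) * ((t - y*δ : ℕ):ℝ) := by push_cast; ring
    have h3 := le_trans h2 hlow
    linarith
  have e : z*δ + (z'*δ - z*δ) = z'*δ := by have := hmul hzz; omega
  rw [e] at key
  exact key

lemma F2 {δ : ℕ} (hδ : 0 < δ) (hM : Tame M)
    (hlb : ∀ s t u : ℕ, s < t → t < u → u ≤ n →
      ((t - s : ℕ) : ℝ) * ((u - t : ℕ) : ℝ) / (δ : ℝ)
        ≤ |cross (Pt n M t - Pt n M s) (Pt n M u - Pt n M s)|)
    (x x' y z : ℕ) (hxx : x ≤ x') (hxy : x' < y) (hyz : y < z) (hz : z * δ ≤ n) :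
    0 < chi n M δ x y z * chi n M δ x' y z := by
  have hmul : ∀ {p q : ℕ}, p ≤ q → p * δ ≤ q * δ := fun h => Nat.mul_le_mul_right δ h
  have hdR : (0:ℝ) < (δ:ℝ) := by exact_mod_cast hδ
  have key := signconst hM (Pt n M (y*δ)) (Pt n M (z*δ)) (x'*δ - x*δ) (x*δ)
    (by have h1 := hmul hxx; have h2 := hmul (le_of_lt hxy); have h3 := hmul (le_of_lt hyz); omega) ?hbig
  case hbig =>
    intro t ht1 ht2
    have h0 := hmul hxx
    have hx'y : x'*δ + δ ≤ y*δ := by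
      have h1 : (x'+1) * δ ≤ y * δ := hmul hxy
      have h2 : (x'+1)*δ = x'*δ + δ := by ring
      omega
    have hyzd : y*δ < z*δ := by
      have h1 : (y+1) * δ ≤ z * δ := hmul hyz
      have h2 : (y+1)*δ = y*δ + δ := by ring
      omega
    have htn : t ≤ n := by omega
    have hty : t < y*δ := by omega
    have hL : ‖Pt n M (z*δ) - Pt n M (y*δ)‖ ≤ ((z - y : ℕ) : ℝ) * δ := by
      have h1 := tame_dist hM (z*δ - y*δ) (y*δ) (by omega)
      have e : y*δ + (z*δ - y*δ) = z*δ := by omega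
      rw [e] at h1
      rw [← dist_eq_norm, dist_comm]
      calc dist (Pt n M (y*δ)) (Pt n M (z*δ)) ≤ ((z*δ - y*δ : ℕ) : ℝ) := h1
        _ = ((z - y : ℕ) : ℝ) * δ := by
            rw [show z*δ - y*δ = (z-y)*δ from by rw [Nat.sub_mul]]; push_cast; ring
    have hlow := hlb t (y*δ) (z*δ) hty hyzd (by omega)
    have heq : cross (Pt n M (y*δ) - Pt n M t) (Pt n M (z*δ) - Pt n M t)
        = cross (Pt n M (z*δ) - Pt n M (y*δ)) (Pt n M t - Pt n M (y*δ)) :=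
      cross_cyclic (Pt n M t) (Pt n M (y*δ)) (Pt n M (z*δ))
    rw [← heq]
    have hK : (0:ℝ) < ((z - y : ℕ) : ℝ) * δ := by
      have : 0 < (z - y) * δ := Nat.mul_pos (by omega) hδ
      calc (0:ℝ) < (((z-y)*δ : ℕ) : ℝ) := by exact_mod_cast this
        _ = ((z - y : ℕ) : ℝ) * δ := by push_cast; ring
    have h2 : ((z - y : ℕ) : ℝ) * δ ≤ ((y*δ - t : ℕ):ℝ) * ((z*δ - y*δ : ℕ):ℝ) / δ := by
      rw [le_div_iff₀ hdR]
      have hnn : (z-y) * δ * δ ≤ (y*δ - t) * (z*δ - y*δ) := by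
        rw [show z*δ - y*δ = (z-y)*δ from by rw [Nat.sub_mul]]
        calc (z-y)*δ*δ = δ * ((z-y)*δ) := by ring
          _ ≤ (y*δ - t) * ((z-y)*δ) := Nat.mul_le_mul (by omega) le_rfl
      calc ((z - y : ℕ):ℝ) * (δ:ℝ) * (δ:ℝ) = (((z-y) * δ * δ : ℕ) : ℝ) := by push_cast; ring
        _ ≤ (((y*δ - t) * (z*δ - y*δ) : ℕ) : ℝ) := by exact_mod_cast hnn
        _ = ((y*δ - t : ℕ):ℝ) * ((z*δ - y*δ : ℕ):ℝ) := by push_cast; ring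
    have h3 := le_trans h2 hlow
    linarith
  have e : x*δ + (x'*δ - x*δ) = x'*δ := by have := hmul hxx; omega
  rw [e] at key
  have e1 : chi n M δ x y z
      = cross (Pt n M (z*δ) - Pt n M (y*δ)) (Pt n M (x*δ) - Pt n M (y*δ)) :=
    cross_cyclic (Pt n M (x*δ)) (Pt n M (y*δ)) (Pt n M (z*δ))
  have e2 : chi n M δ x' y z
      = cross (Pt n M (z*δ) - Pt n M (y*δ)) (Pt n M (x'*δ) - Pt n M (y*δ)) :=
    cross_cyclic (Pt n M (x'*δ)) (Pt n M (y*δ)) (Pt n M (z*δ))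
  rw [e1, e2]
  exact key

lemma F3 {δ : ℕ} (hδ : 0 < δ) (hM : Tame M)
    (hlb : ∀ s t u : ℕ, s < t → t < u → u ≤ n →
      ((t - s : ℕ) : ℝ) * ((u - t : ℕ) : ℝ) / (δ : ℝ)
        ≤ |cross (Pt n M t - Pt n M s) (Pt n M u - Pt n M s)|)
    (m y y' : ℕ) (hm : 3 ≤ m) (hy : 1 ≤ y) (hyy : y ≤ y') (hy' : y' < m) (hmn : m * δ ≤ n) :
    0 < chi n M δ 0 y m * chi n M δ 0 y' m := by
  have hmul : ∀ {p q : ℕ}, p ≤ q → p * δ ≤ q * δ := fun h => Nat.mul_le_mul_right δ h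
  have hdR : (0:ℝ) < (δ:ℝ) := by exact_mod_cast hδ
  have key := signconst hM (Pt n M 0) (Pt n M (m*δ)) (y'*δ - y*δ) (y*δ)
    (by have h1 := hmul hyy; have h2 := hmul (le_of_lt hy'); omega) ?hbig
  case hbig =>
    intro t ht1 ht2
    have h0 := hmul hyy
    have hyd : δ ≤ y*δ := by
      have := hmul hy; omega
    have hy'd : y'*δ + δ ≤ m*δ := by
      have h1 : (y'+1) * δ ≤ m * δ := hmul hy'
      have h2 : (y'+1)*δ = y'*δ + δ := by ring
      omega
    have ht_lo : δ ≤ t := by omega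
    have ht_hi : t + δ ≤ m*δ := by omega
    have htn : t ≤ n := by omega
    have hL : ‖Pt n M (m*δ) - Pt n M 0‖ ≤ ((m : ℕ) : ℝ) * δ := by
      have h1 := tame_dist hM (m*δ) 0 (by omega)
      rw [Nat.zero_add] at h1
      rw [← dist_eq_norm, dist_comm]
      calc dist (Pt n M 0) (Pt n M (m*δ)) ≤ ((m*δ : ℕ) : ℝ) := h1
        _ = ((m : ℕ) : ℝ) * δ := by push_cast; ring
    have hlow := hlb 0 t (m*δ) (by omega) (by omega) (by omega)
    have heq : cross (Pt n M t - Pt n M 0) (Pt n M (m*δ) - Pt n M 0)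
        = -cross (Pt n M (m*δ) - Pt n M 0) (Pt n M t - Pt n M 0) :=
      cross_swap _ _
    rw [heq, abs_neg] at hlow
    have h2 : ((m - 1 : ℕ) : ℝ) * δ ≤ ((t - 0 : ℕ):ℝ) * ((m*δ - t : ℕ):ℝ) / δ := by
      rw [le_div_iff₀ hdR]
      have e0 : ((t - 0 : ℕ):ℝ) = (t:ℝ) := by norm_num
      rw [e0]
      have e1 : ((m*δ - t : ℕ):ℝ) = (m:ℝ)*δ - t := by
        rw [Nat.cast_sub (by omega)]; push_cast; ring
      rw [e1]
      have e2 : ((m - 1 : ℕ):ℝ) = (m:ℝ) - 1 := by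
        rw [Nat.cast_sub (by omega)]; norm_num
      rw [e2]
      have c1 : (δ:ℝ) ≤ (t:ℝ) := by exact_mod_cast ht_lo
      have c2 : (t:ℝ) + δ ≤ (m:ℝ)*δ := by
        calc (t:ℝ) + δ = ((t + δ : ℕ):ℝ) := by push_cast; ring
          _ ≤ ((m*δ : ℕ):ℝ) := by exact_mod_cast ht_hi
          _ = (m:ℝ)*δ := by push_cast; ring
      nlinarith [mul_nonneg (sub_nonneg.mpr c1) (by linarith : (0:ℝ) ≤ (m:ℝ)*δ - δ - t)]
    have h3 := le_trans h2 hlow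
    have hK : (0:ℝ) < ((m - 1 : ℕ) : ℝ) * δ := by
      have : 0 < (m - 1) * δ := Nat.mul_pos (by omega) hδ
      calc (0:ℝ) < (((m-1)*δ : ℕ) : ℝ) := by exact_mod_cast this
        _ = ((m - 1 : ℕ) : ℝ) * δ := by push_cast [Nat.cast_sub (by omega : 1 ≤ m)]; ring
    have hm2 : ((m : ℕ) : ℝ) * δ < 2 * (((m - 1 : ℕ) : ℝ) * δ) := by
      have e2 : ((m - 1 : ℕ):ℝ) = (m:ℝ) - 1 := by
        rw [Nat.cast_sub (by omega)]; norm_num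
      rw [e2]
      have : (3:ℝ) ≤ (m:ℝ) := by exact_mod_cast hm
      nlinarith
    linarith
  have e : y*δ + (y'*δ - y*δ) = y'*δ := by have := hmul hyy; omega
  rw [e] at key
  have e1 : chi n M δ 0 y m
      = -cross (Pt n M (m*δ) - Pt n M (0*δ)) (Pt n M (y*δ) - Pt n M (0*δ)) := by
    rw [chi, cross_swap]
  have e2 : chi n M δ 0 y' m
      = -cross (Pt n M (m*δ) - Pt n M (0*δ)) (Pt n M (y'*δ) - Pt n M (0*δ)) := by
    rw [chi, cross_swap]
  rw [e1, e2, neg_mul_neg]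
  have ez : (0 : ℕ) * δ = 0 := by omega
  rw [ez]
  exact key

lemma chain {δ m : ℕ} (hδ : 0 < δ) (hM : Tame M)
    (hlb : ∀ s t u : ℕ, s < t → t < u → u ≤ n →
      ((t - s : ℕ) : ℝ) * ((u - t : ℕ) : ℝ) / (δ : ℝ)
        ≤ |cross (Pt n M t - Pt n M s) (Pt n M u - Pt n M s)|)
    (hm : 3 ≤ m) (hmn : m * δ ≤ n)
    (x y z : ℕ) (hxy : x < y) (hyz : y < z) (hzm : z ≤ m) :
    0 < chi n M δ x y z * chi n M δ 0 1 m := by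
  have s1 := F1 hδ hM hlb x y z m hxy hyz hzm hmn
  have s2 := F2 hδ hM hlb 0 x y m (Nat.zero_le x) hxy (lt_of_lt_of_le hyz hzm) hmn
  have s3 := F3 hδ hM hlb m 1 y hm le_rfl (by omega) (by omega) hmn
  rw [mul_comm] at s2
  have t1 := pos_trans s1 s2
  rw [mul_comm] at s3
  exact pos_trans t1 s3

lemma allpos {δ m : ℕ} (hδ : 0 < δ) (hM : Tame M)
    (hlb : ∀ s t u : ℕ, s < t → t < u → u ≤ n →
      ((t - s : ℕ) : ℝ) * ((u - t : ℕ) : ℝ) / (δ : ℝ)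
        ≤ |cross (Pt n M t - Pt n M s) (Pt n M u - Pt n M s)|)
    (hm : 3 ≤ m) (hmn : m * δ ≤ n)
    (x y z x' y' z' : ℕ) (hxy : x < y) (hyz : y < z) (hzm : z ≤ m)
    (hxy' : x' < y') (hyz' : y' < z') (hzm' : z' ≤ m) :
    0 < chi n M δ x y z * chi n M δ x' y' z' := by
  have c1 := chain hδ hM hlb hm hmn x y z hxy hyz hzm
  have c2 := chain hδ hM hlb hm hmn x' y' z' hxy' hyz' hzm'
  rw [mul_comm] at c2
  exact pos_trans c1 c2

lemma main {δ : ℕ} (hδ : 0 < δ) (hM : Tame M)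
    (hlb : ∀ s t u : ℕ, s < t → t < u → u ≤ n →
      ((t - s : ℕ) : ℝ) * ((u - t : ℕ) : ℝ) / (δ : ℝ)
        ≤ |cross (Pt n M t - Pt n M s) (Pt n M u - Pt n M s)|)
    (m : ℕ) (hm : 3 ≤ m) (hmn : m * δ ≤ n) :
    ConvexSeq (fun i : Fin (m+1) => Pt n M ((i : ℕ) * δ)) := by
  constructor
  · have key : ∀ p q : Fin (m+1), (p:ℕ) < (q:ℕ) → Pt n M ((p:ℕ)*δ) ≠ Pt n M ((q:ℕ)*δ) := by
      intro p q hpq heq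
      have hqm : (q:ℕ) ≤ m := Nat.lt_succ_iff.mp q.isLt
      rcases Nat.lt_or_ge (q:ℕ) m with hq | hq
      · have hpos := allpos hδ hM hlb hm hmn (p:ℕ) (q:ℕ) m (p:ℕ) (q:ℕ) m hpq hq le_rfl hpq hq le_rfl
        have hzero : chi n M δ (p:ℕ) (q:ℕ) m = 0 := by
          rw [chi, heq, sub_self, cross_zero_left]
        rw [hzero] at hpos; simp at hpos
      · have hqm' : (q:ℕ) = m := by omega
        rcases Nat.eq_zero_or_pos (p:ℕ) with hp | hp
        · have hpos := allpos hδ hM hlb hm hmn 0 1 m 0 1 m (by omega) (by omega) le_rfl (by omega) (by omega) le_rfl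
          have hzero : chi n M δ 0 1 m = 0 := by
            rw [chi]
            have e : Pt n M (m*δ) = Pt n M (0*δ) := by
              rw [hqm'] at heq; rw [hp] at heq; exact heq.symm
            rw [e, sub_self, cross_zero_right]
          rw [hzero] at hpos; simp at hpos
        · have hpos := allpos hδ hM hlb hm hmn 0 (p:ℕ) m 0 (p:ℕ) m hp (by omega) le_rfl hp (by omega) le_rfl
          have hzero : chi n M δ 0 (p:ℕ) m = 0 := by
            rw [hqm'] at heq
            rw [chi, ← heq, cross_self]
          rw [hzero] at hpos; simp at hpos
    intro i j hij
    by_contra hne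
    have hne' : (i:ℕ) ≠ (j:ℕ) := fun h => hne (Fin.ext h)
    rcases Nat.lt_or_ge (i:ℕ) (j:ℕ) with h | h
    · exact key i j h hij
    · exact key j i (by omega) hij.symm
  · intro i j k hji hji1 hki hki1
    have him : (i:ℕ) ≤ m := Nat.lt_succ_iff.mp i.isLt
    have hfac : ∀ w : Fin (m+1), w ≠ i → w ≠ i + 1 →
        ∃ a b c : ℕ, a < b ∧ b < c ∧ c ≤ m ∧
          cross (Pt n M (((i+1 : Fin (m+1)) : ℕ)*δ) - Pt n M ((i:ℕ)*δ))
            (Pt n M ((w:ℕ)*δ) - Pt n M ((i:ℕ)*δ)) = chi n M δ a b c := by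
      intro w hwi hwi1
      have hwm : (w:ℕ) ≤ m := Nat.lt_succ_iff.mp w.isLt
      rcases Nat.lt_or_ge (i:ℕ) m with hi | hi
      · have hv1 : ((i+1 : Fin (m+1)) : ℕ) = (i:ℕ) + 1 := by
          rw [Fin.val_add_one]
          simp [Fin.ext_iff, Fin.last, show (i:ℕ) ≠ m from by omega]
        have hwv : (w:ℕ) ≠ (i:ℕ) := fun h => hwi (Fin.ext h)
        have hwv1 : (w:ℕ) ≠ (i:ℕ) + 1 := fun h => hwi1 (Fin.ext (by rw [hv1]; exact h))
        rcases Nat.lt_or_ge (w:ℕ) (i:ℕ) with hlt | hge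
        · refine ⟨(w:ℕ), (i:ℕ), (i:ℕ)+1, hlt, Nat.lt_succ_self _, by omega, ?_⟩
          rw [hv1]
          exact (cross_cyclic (Pt n M ((w:ℕ)*δ)) (Pt n M ((i:ℕ)*δ)) (Pt n M (((i:ℕ)+1)*δ))).symm
        · refine ⟨(i:ℕ), (i:ℕ)+1, (w:ℕ), Nat.lt_succ_self _, by omega, hwm, ?_⟩
          rw [hv1]; rfl
      · have him' : (i:ℕ) = m := by omega
        have hv1 : ((i+1 : Fin (m+1)) : ℕ) = 0 := by
          rw [Fin.val_add_one]
          simp [Fin.ext_iff, Fin.last, him']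
        have hw0 : (w:ℕ) ≠ 0 := fun h => hwi1 (Fin.ext (by rw [hv1]; exact h))
        have hwm' : (w:ℕ) ≠ m := fun h => hwi (Fin.ext (by rw [him']; exact h))
        refine ⟨0, (w:ℕ), m, by omega, by omega, le_rfl, ?_⟩
        rw [hv1, him', chi]
        rw [cross_cyclic (Pt n M (0*δ)) (Pt n M ((w:ℕ)*δ)) (Pt n M (m*δ)),
            cross_cyclic (Pt n M ((w:ℕ)*δ)) (Pt n M (m*δ)) (Pt n M (0*δ))]
    obtain ⟨a, b, c, hab, hbc, hcm, ej⟩ := hfac j hji hji1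
    obtain ⟨a', b', c', hab', hbc', hcm', ek⟩ := hfac k hki hki1
    apply ssameside_of_cross
    show 0 < cross (Pt n M (((i+1 : Fin (m+1)) : ℕ)*δ) - Pt n M ((i:ℕ)*δ))
            (Pt n M ((j:ℕ)*δ) - Pt n M ((i:ℕ)*δ))
        * cross (Pt n M (((i+1 : Fin (m+1)) : ℕ)*δ) - Pt n M ((i:ℕ)*δ))
            (Pt n M ((k:ℕ)*δ) - Pt n M ((i:ℕ)*δ))
    rw [ej, ek]
    exact allpos hδ hM hlb hm hmn a b c a' b' c' hab hbc hcm hab' hbc' hcm'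

end Stmt5Aux

open Stmt5Aux in
theorem stmt_5 (n : ℕ) (M : Fin (n + 1) → EuclideanSpace ℝ (Fin 2)) (hM : Tame M)
    (δ : ℕ) (hδ : 0 < δ)
    (harea : ∀ i j k : Fin (n + 1), i < j → j < k →
      triArea (M i) (M j) (M k) ≥
        (((j : ℕ) : ℝ) - ((i : ℕ) : ℝ)) * (((k : ℕ) : ℝ) - ((j : ℕ) : ℝ)) / (2 * (δ : ℝ)))
    (hn : 3 ≤ n / δ) :
    ConvexSeq (fun i : Fin (n / δ + 1) =>
      M ⟨(i : ℕ) * δ, by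
        have h1 : (i : ℕ) ≤ n / δ := Nat.lt_succ_iff.mp i.isLt
        have h2 : (i : ℕ) * δ ≤ (n / δ) * δ := Nat.mul_le_mul_right δ h1
        have h3 : (n / δ) * δ ≤ n := Nat.div_mul_le_self n δ
        omega⟩) := by
  have hmn : (n / δ) * δ ≤ n := Nat.div_mul_le_self n δ
  have hdR : (0:ℝ) < (δ:ℝ) := by exact_mod_cast hδ
  have hlb : ∀ s t u : ℕ, s < t → t < u → u ≤ n →
      ((t - s : ℕ) : ℝ) * ((u - t : ℕ) : ℝ) / (δ : ℝ)
        ≤ |Stmt5Aux.cross (Pt n M t - Pt n M s) (Pt n M u - Pt n M s)| := by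
    intro s t u hst htu hun
    have h := harea ⟨s, by omega⟩ ⟨t, by omega⟩ ⟨u, by omega⟩
      (Fin.mk_lt_mk.mpr hst) (Fin.mk_lt_mk.mpr htu)
    rw [triArea_eq] at h
    have h2 : ((t:ℝ)-(s:ℝ))*((u:ℝ)-(t:ℝ))/(2*(δ:ℝ))
        ≤ |Stmt5Aux.cross (M ⟨t, by omega⟩ - M ⟨s, by omega⟩)
            (M ⟨u, by omega⟩ - M ⟨s, by omega⟩)| / 2 := h
    rw [← Pt_eq n M s (by omega) (by omega), ← Pt_eq n M t (by omega) (by omega),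
        ← Pt_eq n M u (by omega) (by omega)] at h2
    rw [Nat.cast_sub hst.le, Nat.cast_sub htu.le]
    have e3 : ((t:ℝ)-(s:ℝ))*((u:ℝ)-(t:ℝ))/(2*(δ:ℝ))
        = (((t:ℝ)-(s:ℝ))*((u:ℝ)-(t:ℝ))/(δ:ℝ))/2 := by
      rw [div_div]; ring_nf
    rw [e3] at h2
    linarith
  have hmain := Stmt5Aux.main hδ hM hlb (n/δ) hn hmn
  have e : (fun i : Fin (n/δ+1) => Pt n M ((i:ℕ)*δ))
      = (fun i : Fin (n/δ+1) => M ⟨(i:ℕ)*δ, by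
          have h1 : (i : ℕ) ≤ n / δ := Nat.lt_succ_iff.mp i.isLt
          have h2 : (i : ℕ) * δ ≤ (n / δ) * δ := Nat.mul_le_mul_right δ h1
          omega⟩) := by
    funext i
    exact Pt_eq n M _ (by
      have h1 : (i : ℕ) ≤ n / δ := Nat.lt_succ_iff.mp i.isLt
      have h2 : (i : ℕ) * δ ≤ (n / δ) * δ := Nat.mul_le_mul_right δ h1
      omega) _
  rw [e] at hmain
  exact hmain
end

section
/- Let M : Fin (n+1) → EuclideanSpace ℝ (Fin 2) be a tame sequence and let δ ≥ 1 be a real number such that for all indices 0 ≤ i < j < k ≤ n one has Area(M i, M j, M k) ≥ (j−i)(k−j)/(2δ). Then for all indices i < j and all k with j + δ ≤ k and k + 1 ≤ n, the points M k and M (k+1) lie strictly on the same side of the affine line through M i and M j (i.e., (affineSpan ℝ {M i, M j}).SSameSide (M k) (M (k+1))). (Second claim in the proof of Lemma 2.) -/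
set_option maxHeartbeats 1000000


/-- the 2D cross product -/
def cross2 (u w : EuclideanSpace ℝ (Fin 2)) : ℝ := u 0 * w 1 - u 1 * w 0

lemma lagrange2 (u w : EuclideanSpace ℝ (Fin 2)) :
    ‖u‖ ^ 2 * ‖w‖ ^ 2 - (inner ℝ u w : ℝ) ^ 2 = cross2 u w ^ 2 := by
  rw [← real_inner_self_eq_norm_sq, ← real_inner_self_eq_norm_sq]
  simp only [PiLp.inner_apply, RCLike.inner_apply, conj_trivial, Fin.sum_univ_two, cross2]
  ring

lemma triArea_eq_cross2 (A B C : EuclideanSpace ℝ (Fin 2)) :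
    triArea A B C = |cross2 (B - A) (C - A)| / 2 := by
  rw [triArea, lagrange2, Real.sqrt_sq_eq_abs]
  ring

lemma abs_cross2_le (u w : EuclideanSpace ℝ (Fin 2)) : |cross2 u w| ≤ ‖u‖ * ‖w‖ := by
  have h := lagrange2 u w
  have h2 : cross2 u w ^ 2 ≤ (‖u‖ * ‖w‖) ^ 2 := by nlinarith [sq_nonneg (inner ℝ u w : ℝ)]
  have h3 := Real.sqrt_le_sqrt h2
  rwa [Real.sqrt_sq_eq_abs, Real.sqrt_sq (by positivity)] at h3

lemma tame_chain {n : ℕ} {M : Fin (n + 1) → EuclideanSpace ℝ (Fin 2)} (hM : Tame M) :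
    ∀ m : ℕ, ∀ i j : Fin (n + 1), (j : ℕ) = (i : ℕ) + m → dist (M i) (M j) ≤ m := by
  intro m
  induction m with
  | zero =>
    intro i j h
    have : i = j := Fin.ext (by omega)
    simp [this]
  | succ m ih =>
    intro i j h
    have hj' : (i : ℕ) + m < n + 1 := by omega
    set j' : Fin (n + 1) := ⟨(i : ℕ) + m, hj'⟩ with hj'def
    have h1 := ih i j' rfl
    have hl : (i : ℕ) + m < n := by omega
    have h2 := hM ⟨(i : ℕ) + m, hl⟩
    have hc : (⟨(i : ℕ) + m, hl⟩ : Fin n).castSucc = j' := rfl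
    have hs : (⟨(i : ℕ) + m, hl⟩ : Fin n).succ = j := Fin.ext (by simp [Fin.val_succ]; omega)
    rw [hc, hs] at h2
    calc dist (M i) (M j) ≤ dist (M i) (M j') + dist (M j') (M j) := dist_triangle _ _ _
      _ ≤ (m : ℝ) + 1 := by linarith
      _ = ((m + 1 : ℕ) : ℝ) := by push_cast; ring

lemma decomp2 (A B P : EuclideanSpace ℝ (Fin 2)) (h : (0:ℝ) < ‖B - A‖ ^ 2) :
    P - (((inner ℝ (P - A) (B - A) : ℝ) / ‖B - A‖ ^ 2) • (B - A) + A) =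
      (cross2 (B - A) (P - A) / ‖B - A‖ ^ 2) •
        (!₂[-((B - A) 1), (B - A) 0] : EuclideanSpace ℝ (Fin 2)) := by
  have hc2 : ‖B - A‖ ^ 2 = (B 0 - A 0) ^ 2 + (B 1 - A 1) ^ 2 := by
    rw [EuclideanSpace.norm_sq_eq]
    simp [PiLp.inner_apply, RCLike.inner_apply, Fin.sum_univ_two, PiLp.sub_apply]
    try ring
  have hne : (B 0 - A 0) ^ 2 + (B 1 - A 1) ^ 2 ≠ 0 := by rw [hc2] at h; exact ne_of_gt h
  have hip : (inner ℝ (P - A) (B - A) : ℝ) =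
      (P 0 - A 0) * (B 0 - A 0) + (P 1 - A 1) * (B 1 - A 1) := by
    simp [PiLp.inner_apply, RCLike.inner_apply, Fin.sum_univ_two, PiLp.sub_apply]
    try ring
  have hcr : cross2 (B - A) (P - A) =
      (B 0 - A 0) * (P 1 - A 1) - (B 1 - A 1) * (P 0 - A 0) := by
    simp [cross2, PiLp.sub_apply]
  ext l
  fin_cases l <;>
  · simp only [PiLp.sub_apply, PiLp.add_apply, PiLp.smul_apply, smul_eq_mul,
      PiLp.toLp_apply, Matrix.cons_val_zero, Matrix.cons_val_one, Matrix.head_cons, hip, hcr, hc2,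
      Fin.isValue, Fin.mk_zero, Fin.mk_one]
    field_simp
    ring

theorem stmt_7 (n : ℕ) (M : Fin (n + 1) → EuclideanSpace ℝ (Fin 2)) (hM : Tame M)
    (δ : ℝ) (hδ : 1 ≤ δ)
    (harea : ∀ i j k : Fin (n + 1), i < j → j < k →
      triArea (M i) (M j) (M k) ≥
        (((j : ℕ) : ℝ) - ((i : ℕ) : ℝ)) * (((k : ℕ) : ℝ) - ((j : ℕ) : ℝ)) / (2 * δ)) :
    ∀ (i j : Fin (n + 1)) (k : ℕ) (hk : ((j : ℕ) : ℝ) + δ ≤ (k : ℝ)) (hkn : k + 1 ≤ n),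
      i < j →
      (affineSpan ℝ {M i, M j}).SSameSide (M ⟨k, by omega⟩) (M ⟨k + 1, by omega⟩) := by
  intro i j k hk hkn hij
  have hδ0 : (0 : ℝ) < δ := by linarith
  set A := M i with hA
  set B := M j with hB
  set kf : Fin (n + 1) := ⟨k, by omega⟩ with hkf
  set kg : Fin (n + 1) := ⟨k + 1, by omega⟩ with hkg
  set x := M kf with hx
  set y := M kg with hy
  set u : EuclideanSpace ℝ (Fin 2) := B - A with hu
  set c : ℝ := ‖u‖ with hc
  set fx : ℝ := cross2 u (x - A) with hfx
  set fy : ℝ := cross2 u (y - A) with hfy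
  -- basic index facts
  have hjk : (j : ℕ) < k := by
    have : ((j : ℕ) : ℝ) + 1 ≤ (k : ℝ) := by linarith
    exact_mod_cast this
  have hijn : (i : ℕ) < (j : ℕ) := hij
  -- area lower bounds
  have hjkf : j < kf := by simpa [Fin.lt_def, hkf] using hjk
  have hjkg : j < kg := by simp [Fin.lt_def, hkg]; omega
  have ha1 := harea i j kf hij hjkf
  have ha2 := harea i j kg hij hjkg
  rw [triArea_eq_cross2] at ha1 ha2
  have hkfv : ((kf : ℕ) : ℝ) = (k : ℝ) := by norm_num [hkf]
  have hkgv : ((kg : ℕ) : ℝ) = (k : ℝ) + 1 := by norm_num [hkg]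
  rw [hkfv] at ha1
  rw [hkgv] at ha2
  -- shorthand reals
  set jr : ℝ := ((j : ℕ) : ℝ) with hjr
  set ir : ℝ := ((i : ℕ) : ℝ) with hir
  have hji1 : (1 : ℝ) ≤ jr - ir := by
    have : (i : ℕ) + 1 ≤ (j : ℕ) := hijn
    have := (Nat.cast_le (α := ℝ)).2 this
    push_cast at this
    linarith
  have habsfx : |fx| ≥ (jr - ir) * ((k : ℝ) - jr) / δ := by
    have : |fx| / 2 ≥ (jr - ir) * ((k : ℝ) - jr) / (2 * δ) := ha1
    have h2 : (jr - ir) * ((k : ℝ) - jr) / (2 * δ) = ((jr - ir) * ((k : ℝ) - jr) / δ) / 2 := by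
      rw [div_div]; ring_nf
    rw [h2] at this
    linarith
  have habsfy : |fy| ≥ (jr - ir) * ((k : ℝ) + 1 - jr) / δ := by
    have : |fy| / 2 ≥ (jr - ir) * ((k : ℝ) + 1 - jr) / (2 * δ) := ha2
    have h2 : (jr - ir) * ((k : ℝ) + 1 - jr) / (2 * δ) =
        ((jr - ir) * ((k : ℝ) + 1 - jr) / δ) / 2 := by
      rw [div_div]; ring_nf
    rw [h2] at this
    linarith
  have hkj : δ ≤ (k : ℝ) - jr := by linarith
  -- fx ≠ 0
  have hfx0 : fx ≠ 0 := by
    intro h0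
    rw [h0, abs_zero] at habsfx
    have : (0 : ℝ) < (jr - ir) * ((k : ℝ) - jr) / δ := by
      apply div_pos (mul_pos (by linarith) (by linarith)) hδ0
    linarith
  -- c > 0
  have hc0 : 0 < c := by
    rcases eq_or_lt_of_le (norm_nonneg u) with h | h
    · exfalso
      have hu0 : u = 0 := by rwa [eq_comm, norm_eq_zero] at h
      apply hfx0
      rw [hfx, hu0]
      simp [cross2]
    · exact h
  -- c ≤ jr - ir
  have hcji : c ≤ jr - ir := by
    have hch := tame_chain hM ((j : ℕ) - (i : ℕ)) i j (by omega)
    have hdist : dist A B = c := by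
      rw [hc, hu, dist_eq_norm, norm_sub_rev]
    have hcast : (((j : ℕ) - (i : ℕ) : ℕ) : ℝ) = jr - ir := by
      push_cast [Nat.cast_sub hijn.le]; ring
    rw [hcast] at hch
    calc c = dist A B := hdist.symm
      _ ≤ jr - ir := hch
  -- dist x y ≤ 1
  have hdxy : dist x y ≤ 1 := by
    have h2 := hM ⟨k, by omega⟩
    have hc1 : (⟨k, by omega⟩ : Fin n).castSucc = kf := rfl
    have hs1 : (⟨k, by omega⟩ : Fin n).succ = kg := rfl
    rwa [hc1, hs1] at h2
  -- Lipschitz bound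
  have hlip : |fx - fy| ≤ c := by
    have heq : fx - fy = cross2 u (x - y) := by
      rw [hfx, hfy]
      simp only [cross2, PiLp.sub_apply]
      ring
    rw [heq]
    calc |cross2 u (x - y)| ≤ ‖u‖ * ‖x - y‖ := abs_cross2_le _ _
      _ = c * dist x y := by rw [hc, dist_eq_norm]
      _ ≤ c * 1 := by apply mul_le_mul_of_nonneg_left hdxy hc0.le
      _ = c := mul_one c
  -- quantitative bounds on |fx|, |fy|
  have hfxc : c ≤ |fx| := by
    have h1 : c * δ ≤ (jr - ir) * ((k : ℝ) - jr) :=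
      mul_le_mul hcji hkj hδ0.le (by linarith)
    have h2 : c ≤ (jr - ir) * ((k : ℝ) - jr) / δ := by
      rw [le_div_iff₀ hδ0]; linarith
    linarith
  have hfyc : c < |fy| := by
    have h1 : c * (δ + 1) ≤ (jr - ir) * ((k : ℝ) + 1 - jr) :=
      mul_le_mul hcji (by linarith) (by linarith) (by linarith)
    have h1' : c * (δ + 1) / δ ≤ (jr - ir) * ((k : ℝ) + 1 - jr) / δ := by gcongr
    have h2 : c * (δ + 1) / δ = c + c / δ := by
      rw [mul_add, mul_one, add_div, mul_div_assoc, div_self (ne_of_gt hδ0), mul_one]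
    have h3 : 0 < c / δ := div_pos hc0 hδ0
    rw [h2] at h1'
    linarith
  -- same sign
  have hsign : 0 < fx * fy := by
    have hna := neg_abs_le (fx - fy)
    have hla := le_abs_self (fx - fy)
    rcases le_or_gt fx 0 with h1 | h1
    · have hfxe : |fx| = -fx := abs_of_nonpos h1
      have hfxlt : fx ≤ -c := by linarith
      have hfyneg : fy < 0 := by
        by_contra h2
        push_neg at h2
        have : |fy| = fy := abs_of_nonneg h2
        linarith
      exact mul_pos_of_neg_of_neg (by linarith) hfyneg
    · have hfxe : |fx| = fx := abs_of_pos h1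
      have hfypos : 0 < fy := by
        by_contra h2
        push_neg at h2
        have : |fy| = -fy := abs_of_nonpos h2
        linarith
      exact mul_pos h1 hfypos
  have hfy0 : fy ≠ 0 := fun h => by rw [h, mul_zero] at hsign; linarith
  -- decomposition: the perpendicular vector
  set v : EuclideanSpace ℝ (Fin 2) := !₂[-(u 1), u 0] with hv
  have hc2pos : 0 < c ^ 2 := by positivity
  have hdecomp : ∀ P : EuclideanSpace ℝ (Fin 2),
      P - (((inner ℝ (P - A) u : ℝ) / c ^ 2) • (B - A) + A) = (cross2 u (P - A) / c ^ 2) • v :=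
    fun P => decomp2 A B P hc2pos
  -- the two projection points
  set ax : ℝ := (inner ℝ (x - A) u : ℝ) / c ^ 2 with hax
  set ay : ℝ := (inner ℝ (y - A) u : ℝ) / c ^ 2 with hay
  set p₁ := AffineMap.lineMap A B ax with hp₁
  set p₂ := AffineMap.lineMap A B ay with hp₂
  have hp₁mem : p₁ ∈ affineSpan ℝ {A, B} := AffineMap.lineMap_mem_affineSpan_pair _ _ _
  have hp₂mem : p₂ ∈ affineSpan ℝ {A, B} := AffineMap.lineMap_mem_affineSpan_pair _ _ _
  have hp₁eq : p₁ = ax • (B - A) + A := by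
    rw [hp₁, AffineMap.lineMap_apply]
    rfl
  have hp₂eq : p₂ = ay • (B - A) + A := by
    rw [hp₂, AffineMap.lineMap_apply]
    rfl
  have hx1 : x -ᵥ p₁ = (fx / c ^ 2) • v := by
    rw [hp₁eq]
    exact hdecomp x
  have hy1 : y -ᵥ p₂ = (fy / c ^ 2) • v := by
    rw [hp₂eq]
    exact hdecomp y
  -- same ray
  have hray : SameRay ℝ (x -ᵥ p₁) (y -ᵥ p₂) := by
    rw [hx1, hy1]
    set b : ℝ := fx / c ^ 2 with hb
    set b' : ℝ := fy / c ^ 2 with hb'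
    have hbne : b ≠ 0 := div_ne_zero hfx0 (ne_of_gt hc2pos)
    have hbb' : 0 < b' / b := by
      apply div_pos_iff.2
      rcases (mul_pos_iff.1 hsign) with ⟨h1, h2⟩ | ⟨h1, h2⟩
      · left; exact ⟨div_pos h2 hc2pos, div_pos h1 hc2pos⟩
      · right; exact ⟨div_neg_of_neg_of_pos h2 hc2pos, div_neg_of_neg_of_pos h1 hc2pos⟩
    have : b' • v = (b' / b) • (b • v) := by
      rw [smul_smul, div_mul_cancel₀ _ hbne]
    rw [this]
    exact SameRay.sameRay_nonneg_smul_right _ hbb'.le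
  -- non-membership
  have hnotmem : ∀ P : EuclideanSpace ℝ (Fin 2), cross2 u (P - A) ≠ 0 →
      P ∉ affineSpan ℝ {A, B} := by
    intro P hP hmem
    apply hP
    have : P = (P - A) +ᵥ A := by simp [vsub_eq_sub]
    rw [this] at hmem
    rw [vadd_left_mem_affineSpan_pair] at hmem
    obtain ⟨r, hr⟩ := hmem
    have hru : (P - A) = r • u := by
      rw [← hr]; rfl
    rw [hru]
    simp [cross2, PiLp.smul_apply]
    ring
  have hfx0' : fx ≠ 0 := hfx0
  exact ⟨⟨p₁, hp₁mem, p₂, hp₂mem, hray⟩, hnotmem x hfx0, hnotmem y hfy0⟩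
end

section
/- Let d ≥ 2, let n be a natural number, and let 0 ≤ i < j < k ≤ n be indices. Then there exists a non-expanding embedding g : Fin (n+1) → EuclideanSpace ℝ (Fin d) (i.e., dist(g p, g q) ≤ |p − q| for all p, q) such that Area(g i, g j, g k) = (j−i)(k−j)/2. (Attainment half of the identity ρ₃(i,j,k) = (j−i)(k−j)/2, realized by an L-shaped configuration with a right angle at g j.) -/
lemma sum_two {d : ℕ} (hd : 2 ≤ d) (a b : ℝ) :
    ∑ t : Fin d, (if (t : ℕ) = 0 then a else if (t : ℕ) = 1 then b else 0) = a + b := by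
  rw [Finset.sum_eq_add_of_mem (⟨0, by omega⟩ : Fin d) (⟨1, by omega⟩ : Fin d)
    (Finset.mem_univ _) (Finset.mem_univ _) (by simp [Fin.ext_iff]) ?_]
  · simp
  · intro c _ hc
    simp [show (c : ℕ) ≠ 0 from fun h => hc.1 (Fin.ext h),
      show (c : ℕ) ≠ 1 from fun h => hc.2 (Fin.ext h)]

theorem stmt_9 (d : ℕ) (hd : 2 ≤ d) (n : ℕ) (i j k : Fin (n + 1))
    (hij : i < j) (hjk : j < k) :
    ∃ g : Fin (n + 1) → EuclideanSpace ℝ (Fin d),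
      (∀ p q : Fin (n + 1), dist (g p) (g q) ≤ |((p : ℕ) : ℝ) - ((q : ℕ) : ℝ)|) ∧
      triArea (g i) (g j) (g k) =
        (((j : ℕ) : ℝ) - ((i : ℕ) : ℝ)) * (((k : ℕ) : ℝ) - ((j : ℕ) : ℝ)) / 2 := by
  set J : ℝ := ((j : ℕ) : ℝ) with hJ
  have normsq : ∀ x : EuclideanSpace ℝ (Fin d), ‖x‖ ^ 2 = ∑ t, x t ^ 2 := fun x => by
    rw [EuclideanSpace.norm_eq, Real.sq_sqrt (Finset.sum_nonneg fun _ _ => sq_nonneg _)]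
    simp [Real.norm_eq_abs, sq_abs]
  set g : Fin (n + 1) → EuclideanSpace ℝ (Fin d) := fun p => WithLp.toLp 2 (fun t : Fin d =>
    if (t : ℕ) = 0 then min ((p : ℕ) : ℝ) J
    else if (t : ℕ) = 1 then max ((p : ℕ) : ℝ) J - J else 0) with hg
  have gapp : ∀ (p : Fin (n + 1)) (t : Fin d), g p t =
      if (t : ℕ) = 0 then min ((p : ℕ) : ℝ) J
      else if (t : ℕ) = 1 then max ((p : ℕ) : ℝ) J - J else 0 := fun p t => rfl
  have subapp : ∀ (x y : EuclideanSpace ℝ (Fin d)) (t : Fin d), (x - y) t = x t - y t :=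
    fun x y t => rfl
  refine ⟨g, ?_, ?_⟩
  · intro p q
    set P : ℝ := ((p : ℕ) : ℝ)
    set Q : ℝ := ((q : ℕ) : ℝ)
    rw [EuclideanSpace.dist_eq]
    have hsum : ∑ t : Fin d, dist (g p t) (g q t) ^ 2
        = (min P J - min Q J) ^ 2 + (max P J - max Q J) ^ 2 := by
      rw [← sum_two hd ((min P J - min Q J) ^ 2) ((max P J - max Q J) ^ 2)]
      apply Finset.sum_congr rfl
      intro t _
      rw [gapp, gapp]
      by_cases h0 : (t : ℕ) = 0 <;> by_cases h1 : (t : ℕ) = 1 <;>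
        simp [h0, h1, Real.dist_eq, sq_abs, show ((p : ℕ) : ℝ) = P from rfl,
          show ((q : ℕ) : ℝ) = Q from rfl]
    rw [hsum, show |P - Q| = Real.sqrt ((P - Q) ^ 2) by rw [Real.sqrt_sq_eq_abs]]
    apply Real.sqrt_le_sqrt
    have h3 : min P J + max P J = P + J := min_add_max P J
    have h4 : min Q J + max Q J = Q + J := min_add_max Q J
    rcases le_total P Q with h | h
    · have h1 : min P J ≤ min Q J := min_le_min h le_rfl
      have h2 : max P J ≤ max Q J := max_le_max h le_rfl
      nlinarith
    · have h1 : min Q J ≤ min P J := min_le_min h le_rfl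
      have h2 : max Q J ≤ max P J := max_le_max h le_rfl
      nlinarith
  · set I : ℝ := ((i : ℕ) : ℝ)
    set K : ℝ := ((k : ℕ) : ℝ)
    have hIJ : I ≤ J := Nat.cast_le.mpr (Fin.le_def.mp hij.le)
    have hJK : J ≤ K := Nat.cast_le.mpr (Fin.le_def.mp hjk.le)
    have e1 : min I J = I := min_eq_left hIJ
    have e3 : max I J - J = 0 := by rw [max_eq_right hIJ]; ring
    have e4 : min J J = J := min_self J
    have e5 : max J J - J = 0 := by rw [max_self]; ring
    have e6 : min K J = J := min_eq_right hJK
    have e7 : max K J - J = K - J := by rw [max_eq_left hJK]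
    have hB : ‖g j - g i‖ ^ 2 = (J - I) ^ 2 := by
      rw [normsq, show (J - I) ^ 2 = (J - I) ^ 2 + 0 by ring, ← sum_two hd ((J - I) ^ 2) 0]
      apply Finset.sum_congr rfl
      intro t _
      rw [subapp, gapp, gapp]
      by_cases h0 : (t : ℕ) = 0 <;> by_cases h1 : (t : ℕ) = 1 <;>
        simp [h0, h1, e1, e3, e4, e5,
          show ((i : ℕ) : ℝ) = I from rfl, show ((j : ℕ) : ℝ) = J from rfl, show ((k : ℕ) : ℝ) = K from rfl]
    have hC : ‖g k - g i‖ ^ 2 = (J - I) ^ 2 + (K - J) ^ 2 := by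
      rw [normsq, ← sum_two hd ((J - I) ^ 2) ((K - J) ^ 2)]
      apply Finset.sum_congr rfl
      intro t _
      rw [subapp, gapp, gapp]
      by_cases h0 : (t : ℕ) = 0 <;> by_cases h1 : (t : ℕ) = 1 <;>
        simp [h0, h1, e1, e3, e6, e7,
          show ((i : ℕ) : ℝ) = I from rfl, show ((j : ℕ) : ℝ) = J from rfl, show ((k : ℕ) : ℝ) = K from rfl]
    have hInner : (inner ℝ (g j - g i) (g k - g i) : ℝ) = (J - I) * (J - I) := by
      rw [PiLp.inner_apply]
      simp only [RCLike.inner_apply, conj_trivial]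
      rw [show (J - I) * (J - I) = (J - I) * (J - I) + 0 by ring,
        ← sum_two hd ((J - I) * (J - I)) 0]
      apply Finset.sum_congr rfl
      intro t _
      rw [subapp, subapp, gapp, gapp, gapp]
      by_cases h0 : (t : ℕ) = 0 <;> by_cases h1 : (t : ℕ) = 1 <;>
        simp [h0, h1, e1, e3, e4, e5, e6, e7,
          show ((i : ℕ) : ℝ) = I from rfl, show ((j : ℕ) : ℝ) = J from rfl, show ((k : ℕ) : ℝ) = K from rfl]
    unfold triArea
    rw [hB, hC, hInner]
    rw [show (J - I) ^ 2 * ((J - I) ^ 2 + (K - J) ^ 2) - ((J - I) * (J - I)) ^ 2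
      = ((J - I) * (K - J)) ^ 2 by ring]
    rw [Real.sqrt_sq (by nlinarith)]
    ring
end

section
/- For every tame sequence M : Fin 4 → EuclideanSpace ℝ (Fin 2) (that is, any embedding of the path Π₃ of length 3), there exist indices 0 ≤ i < j < k ≤ 3 with Area(M i, M j, M k) ≤ (√3/4)·(j−i)(k−j). (The 3-distortion δ₃(Π₃, ℝ²) is at least 2/√3.) -/
lemma lagrange_shift {d : ℕ} (p q : EuclideanSpace ℝ (Fin d)) :
    ‖p‖ ^ 2 * ‖q‖ ^ 2 - (inner ℝ p q : ℝ) ^ 2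
      = ‖p‖ ^ 2 * ‖q - p‖ ^ 2 - (inner ℝ p (q - p) : ℝ) ^ 2 := by
  have h1 : ‖q - p‖ ^ 2 = ‖q‖ ^ 2 - 2 * (inner ℝ p q : ℝ) + ‖p‖ ^ 2 := by
    rw [norm_sub_sq_real, real_inner_comm]
  have h2 : (inner ℝ p (q - p) : ℝ) = (inner ℝ p q : ℝ) - ‖p‖ ^ 2 := by
    rw [inner_sub_right, real_inner_self_eq_norm_sq]
  rw [h1, h2]; ring

lemma triArea_le {d : ℕ} (A B C : EuclideanSpace ℝ (Fin d)) (r : ℝ) (hr : 0 ≤ r)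
    (h : ‖B - A‖ ^ 2 * ‖C - A‖ ^ 2 - (inner ℝ (B - A) (C - A) : ℝ) ^ 2 ≤ r ^ 2) :
    triArea A B C ≤ r / 2 := by
  unfold triArea
  have := Real.sqrt_le_sqrt h
  rw [Real.sqrt_sq hr] at this
  linarith

theorem stmt_10 (M : Fin 4 → EuclideanSpace ℝ (Fin 2)) (hM : Tame M) :
    ∃ i j k : Fin 4, i < j ∧ j < k ∧
      triArea (M i) (M j) (M k) ≤
        (Real.sqrt 3 / 4) * ((((j : ℕ) : ℝ) - ((i : ℕ) : ℝ)) * (((k : ℕ) : ℝ) - ((j : ℕ) : ℝ))) := by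
  have h01 : ‖M 1 - M 0‖ ≤ 1 := by
    have := hM 0; rw [dist_eq_norm, norm_sub_rev] at this; exact this
  have h12 : ‖M 2 - M 1‖ ≤ 1 := by
    have := hM 1; rw [dist_eq_norm, norm_sub_rev] at this; exact this
  have h23 : ‖M 3 - M 2‖ ≤ 1 := by
    have := hM 2; rw [dist_eq_norm, norm_sub_rev] at this; exact this
  have hs3 : (0:ℝ) ≤ Real.sqrt 3 := Real.sqrt_nonneg 3
  by_cases h : ‖M 2 - M 0‖ ^ 2 ≤ 3
  · -- use triangle (0, 2, 3)
    refine ⟨0, 2, 3, by decide, by decide, ?_⟩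
    have key := lagrange_shift (M 2 - M 0) (M 3 - M 0)
    have e : (M 3 - M 0) - (M 2 - M 0) = M 3 - M 2 := by abel
    rw [e] at key
    have hb : triArea (M 0) (M 2) (M 3) ≤ Real.sqrt 3 / 2 := by
      have := Real.sq_sqrt (by norm_num : (3:ℝ) ≥ 0)
      refine triArea_le _ _ _ (Real.sqrt 3) hs3 ?_
      rw [key, this]
      nlinarith [sq_nonneg (inner ℝ (M 2 - M 0) (M 3 - M 2) : ℝ), norm_nonneg (M 3 - M 2),
        norm_nonneg (M 2 - M 0), sq_nonneg (‖M 2 - M 0‖)]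
    simp only [show ((2:Fin 4):ℕ) = 2 from rfl, show ((0:Fin 4):ℕ) = 0 from rfl,
      show ((3:Fin 4):ℕ) = 3 from rfl]
    push_cast
    linarith
  · -- use triangle (0, 1, 2)
    push_neg at h
    refine ⟨0, 1, 2, by decide, by decide, ?_⟩
    have key := lagrange_shift (M 1 - M 0) (M 2 - M 0)
    have e : (M 2 - M 0) - (M 1 - M 0) = M 2 - M 1 := by abel
    rw [e] at key
    -- inner product bound
    have hq : ‖M 2 - M 1‖ ^ 2 = ‖M 2 - M 0‖ ^ 2
        - 2 * (inner ℝ (M 1 - M 0) (M 2 - M 0) : ℝ) + ‖M 1 - M 0‖ ^ 2 := by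
      have := lagrange_shift (M 1 - M 0) (M 2 - M 0)
      rw [← e, norm_sub_sq_real, real_inner_comm]
    have h2 : (inner ℝ (M 1 - M 0) (M 2 - M 1) : ℝ)
        = (inner ℝ (M 1 - M 0) (M 2 - M 0) : ℝ) - ‖M 1 - M 0‖ ^ 2 := by
      rw [← e, inner_sub_right, real_inner_self_eq_norm_sq]
    have ht : (1:ℝ) / 2 < (inner ℝ (M 1 - M 0) (M 2 - M 1) : ℝ) := by
      nlinarith [norm_nonneg (M 1 - M 0), norm_nonneg (M 2 - M 1)]
    have hb : triArea (M 0) (M 1) (M 2) ≤ Real.sqrt 3 / 2 / 2 := by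
      refine triArea_le _ _ _ (Real.sqrt 3 / 2) (by positivity) ?_
      have h3 : (Real.sqrt 3 / 2) ^ 2 = 3 / 4 := by
        rw [div_pow, Real.sq_sqrt (by norm_num : (0:ℝ) ≤ 3)]; norm_num
      rw [key, h3]
      have ha : ‖M 1 - M 0‖ ^ 2 ≤ 1 := by nlinarith [norm_nonneg (M 1 - M 0)]
      have hb2 : ‖M 2 - M 1‖ ^ 2 ≤ 1 := by nlinarith [norm_nonneg (M 2 - M 1)]
      nlinarith [ht, mul_le_mul ha hb2 (sq_nonneg ‖M 2 - M 1‖) zero_le_one]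
    simp only [show ((1:Fin 4):ℕ) = 1 from rfl, show ((0:Fin 4):ℕ) = 0 from rfl,
      show ((2:Fin 4):ℕ) = 2 from rfl]
    push_cast
    linarith
end

section
/- There exists a constant C > 0 such that for every natural number m ≥ 1 there is a tame sequence M : Fin (m+1) → EuclideanSpace ℝ (Fin 2), all of whose points lie on a common circle with dist(M i, M (i+1)) = 1 for every i < m, satisfying Area(M i, M j, M k) ≥ (j−i)(k−j)/(2·C·m) for all indices 0 ≤ i < j < k ≤ m. (When m+1 points lie at consecutive distance 1 on a suitable arc of circle, the 3-distortion is O(m); this is the planar case d = 2 of Proposition 2.) -/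
open Real

lemma tri_sin2 (a b : ℝ) : sin (2*a) + sin (2*b) - sin (2*a + 2*b) = 4 * sin a * sin b * sin (a+b) := by
  have h : 2*a+2*b = 2*(a+b) := by ring
  rw [h, Real.sin_two_mul, Real.sin_two_mul, Real.sin_two_mul, Real.sin_add, Real.cos_add]
  linear_combination (-2*sin a*cos a)*(Real.sin_sq_add_cos_sq b) + (-2*sin b*cos b)*(Real.sin_sq_add_cos_sq a)

lemma tri_sin (x y : ℝ) : sin x + sin y - sin (x + y) = 4 * sin (x/2) * sin (y/2) * sin ((x+y)/2) := by
  have h := tri_sin2 (x/2) (y/2)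
  rw [show 2*(x/2) = x by ring, show 2*(y/2) = y by ring] at h
  rw [show (x+y)/2 = x/2 + y/2 by ring]
  exact h

lemma crossid (s t u : ℝ) : (cos t - cos s)*(sin u - sin s) - (sin t - sin s)*(cos u - cos s)
    = sin (u - t) + sin (t - s) - sin (u - s) := by
  rw [Real.sin_sub, Real.sin_sub, Real.sin_sub]; ring

lemma gram (u v : EuclideanSpace ℝ (Fin 2)) :
    ‖u‖^2 * ‖v‖^2 - (inner ℝ u v : ℝ)^2 = (u 0 * v 1 - u 1 * v 0)^2 := by
  rw [← real_inner_self_eq_norm_sq, ← real_inner_self_eq_norm_sq]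
  simp [PiLp.inner_apply, Fin.sum_univ_two, RCLike.inner_apply, conj_trivial, EuclideanSpace.norm_sq_eq]
  ring

set_option maxHeartbeats 2000000 in
theorem stmt_12 :
    ∃ C : ℝ, 0 < C ∧
      ∀ m : ℕ, 1 ≤ m →
        ∃ M : Fin (m + 1) → EuclideanSpace ℝ (Fin 2), Tame M ∧
          (∃ (O : EuclideanSpace ℝ (Fin 2)) (R : ℝ), ∀ i : Fin (m + 1), dist (M i) O = R) ∧
          (∀ i : Fin m, dist (M i.castSucc) (M i.succ) = 1) ∧
          ∀ i j k : Fin (m + 1), i < j → j < k →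
            triArea (M i) (M j) (M k) ≥
              (((j : ℕ) : ℝ) - ((i : ℕ) : ℝ)) * (((k : ℕ) : ℝ) - ((j : ℕ) : ℝ)) /
                (2 * C * (m : ℝ)) := by
  refine ⟨2, by norm_num, fun m hm => ?_⟩
  have hm0 : (0:ℝ) < m := by exact_mod_cast hm
  set θ : ℝ := π / m with hθdef
  have hθpos : 0 < θ := by positivity
  have hmθ : (m:ℝ) * θ = π := by rw [hθdef]; field_simp
  have hθ2pos : 0 < θ/2 := by positivity
  have hθ2le : θ/2 ≤ π/2 := by
    have h : θ ≤ π := by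
      rw [hθdef]
      exact div_le_self Real.pi_pos.le (by exact_mod_cast hm)
    linarith
  have hθlt : θ/2 < π := lt_of_le_of_lt hθ2le (by linarith [Real.pi_pos])
  have hs : 0 < Real.sin (θ/2) := Real.sin_pos_of_pos_of_lt_pi hθ2pos hθlt
  set R : ℝ := 1/(2 * Real.sin (θ/2)) with hRdef
  have hR : 0 < R := by positivity
  have hRs : 2 * R * Real.sin (θ/2) = 1 := by
    rw [hRdef]; field_simp
  -- cos θ in terms of sin (θ/2)
  have hθc : Real.cos θ = 1 - 2 * Real.sin (θ/2)^2 := by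
    have h2 := Real.cos_two_mul (θ/2)
    rw [show 2*(θ/2) = θ by ring] at h2
    have p := Real.sin_sq_add_cos_sq (θ/2)
    linarith
  set P : ℝ → EuclideanSpace ℝ (Fin 2) :=
    fun t => ((WithLp.equiv 2 (Fin 2 → ℝ)).symm ![R * Real.cos t, R * Real.sin t]) with hPdef
  have hP0 : ∀ t : ℝ, P t 0 = R * Real.cos t := fun t => by rw [hPdef]; simp
  have hP1 : ∀ t : ℝ, P t 1 = R * Real.sin t := fun t => by rw [hPdef]; simp
  have hsub : ∀ (x y : EuclideanSpace ℝ (Fin 2)) (l : Fin 2), (x - y) l = x l - y l :=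
    fun _ _ _ => rfl
  -- distance of consecutive points
  have hstep : ∀ s : ℝ, dist (P s) (P (s + θ)) = 1 := by
    intro s
    rw [EuclideanSpace.dist_eq]
    have key : ∑ l : Fin 2, dist (P s l) (P (s+θ) l) ^ 2 = 1 := by
      rw [Fin.sum_univ_two, hP0, hP0, hP1, hP1, Real.dist_eq, Real.dist_eq, sq_abs, sq_abs]
      have e1 : (R * Real.cos s - R * Real.cos (s+θ))^2 + (R * Real.sin s - R * Real.sin (s+θ))^2
          = R^2 * (2 - 2*Real.cos θ) := by
        rw [Real.cos_add, Real.sin_add]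
        linear_combination (R^2*((1-Real.cos θ)^2 + Real.sin θ^2)) * (Real.sin_sq_add_cos_sq s)
          + R^2 * (Real.sin_sq_add_cos_sq θ)
      rw [e1]
      linear_combination (2*R*Real.sin (θ/2)+1)*hRs - 2*R^2*hθc
    rw [key, Real.sqrt_one]
  refine ⟨fun i => P ((i:ℕ) * θ), ?_, ⟨0, R, ?_⟩, ?_, ?_⟩
  · -- Tame
    intro i
    have h : ((i.succ : ℕ) : ℝ) * θ = ((i.castSucc : ℕ) : ℝ) * θ + θ := by
      push_cast [Fin.val_succ, Fin.coe_castSucc]; ring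
    dsimp only
    rw [h, hstep]
  · -- circle
    intro i
    rw [dist_zero_right, EuclideanSpace.norm_eq]
    have key : ∑ l : Fin 2, ‖P ((i:ℕ)*θ) l‖ ^ 2 = R^2 := by
      rw [Fin.sum_univ_two, hP0, hP1, Real.norm_eq_abs, Real.norm_eq_abs, sq_abs, sq_abs]
      linear_combination R^2 * (Real.sin_sq_add_cos_sq (((i:ℕ):ℝ)*θ))
    rw [key, Real.sqrt_sq hR.le]
  · -- unit steps
    intro i
    have h : ((i.succ : ℕ) : ℝ) * θ = ((i.castSucc : ℕ) : ℝ) * θ + θ := by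
      push_cast [Fin.val_succ, Fin.coe_castSucc]; ring
    dsimp only
    rw [h, hstep]
  · -- main inequality
    intro i j k hij hjk
    dsimp only
    have hij' : (i:ℕ) < (j:ℕ) := hij
    have hjk' : (j:ℕ) < (k:ℕ) := hjk
    have hk : (k:ℕ) ≤ m := Nat.lt_succ_iff.mp k.isLt
    set a : ℕ := (j:ℕ) - (i:ℕ) with hadef
    set b : ℕ := (k:ℕ) - (j:ℕ) with hbdef
    have haR : ((a:ℕ):ℝ) = ((j:ℕ):ℝ) - ((i:ℕ):ℝ) := by
      rw [hadef]; push_cast [Nat.cast_sub hij'.le]; ring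
    have hbR : ((b:ℕ):ℝ) = ((k:ℕ):ℝ) - ((j:ℕ):ℝ) := by
      rw [hbdef]; push_cast [Nat.cast_sub hjk'.le]; ring
    have ha1 : 1 ≤ a := by omega
    have hb1 : 1 ≤ b := by omega
    have hab : a + b ≤ m := by omega
    have ha1R : (1:ℝ) ≤ (a:ℝ) := by exact_mod_cast ha1
    have hb1R : (1:ℝ) ≤ (b:ℝ) := by exact_mod_cast hb1
    have habR : (a:ℝ) + (b:ℝ) ≤ (m:ℝ) := by exact_mod_cast hab
    set α : ℝ := ((i:ℕ):ℝ) * θ with hα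
    set β : ℝ := ((j:ℕ):ℝ) * θ with hβ
    set γ : ℝ := ((k:ℕ):ℝ) * θ with hγ
    have hβα : β - α = (a:ℝ) * θ := by rw [hβ, hα, haR]; ring
    have hγβ : γ - β = (b:ℝ) * θ := by rw [hγ, hβ, hbR]; ring
    have hγα : γ - α = (a:ℝ)*θ + (b:ℝ)*θ := by rw [hγ, hα, haR, hbR]; ring
    -- angle bounds
    have haθpos : 0 < (a:ℝ)*θ/2 := by positivity
    have haθle : (a:ℝ)*θ/2 ≤ π/2 := by
      have : (a:ℝ)*θ ≤ (m:ℝ)*θ := by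
        apply mul_le_mul_of_nonneg_right _ hθpos.le; linarith
      rw [hmθ] at this; linarith
    have hbθpos : 0 < (b:ℝ)*θ/2 := by positivity
    have hbθle : (b:ℝ)*θ/2 ≤ π/2 := by
      have : (b:ℝ)*θ ≤ (m:ℝ)*θ := by
        apply mul_le_mul_of_nonneg_right _ hθpos.le; linarith
      rw [hmθ] at this; linarith
    have habθle : ((a:ℝ)*θ + (b:ℝ)*θ)/2 ≤ π/2 := by
      have : (a:ℝ)*θ + (b:ℝ)*θ ≤ (m:ℝ)*θ := by
        have := mul_le_mul_of_nonneg_right habR hθpos.le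
        linarith [this]
      rw [hmθ] at this; linarith
    -- sine lower bounds
    have hs1lb : (a:ℝ)/m ≤ Real.sin ((a:ℝ)*θ/2) := by
      have h := Real.mul_le_sin haθpos.le haθle
      have e : 2/π * ((a:ℝ)*θ/2) = (a:ℝ)/m := by
        rw [hθdef]; field_simp
      rw [e] at h; exact h
    have hs2lb : (b:ℝ)/m ≤ Real.sin ((b:ℝ)*θ/2) := by
      have h := Real.mul_le_sin hbθpos.le hbθle
      have e : 2/π * ((b:ℝ)*θ/2) = (b:ℝ)/m := by
        rw [hθdef]; field_simp
      rw [e] at h; exact h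
    have hs3lb : Real.sin (θ/2) ≤ Real.sin (((a:ℝ)*θ + (b:ℝ)*θ)/2) := by
      apply Real.sin_le_sin_of_le_of_le_pi_div_two (by linarith) habθle
      have h1 : θ*1 ≤ θ*((a:ℝ)+(b:ℝ)) := mul_le_mul_of_nonneg_left (by linarith) hθpos.le
      linarith
    have hs1nn : 0 ≤ Real.sin ((a:ℝ)*θ/2) := le_trans (by positivity) hs1lb
    have hs2nn : 0 ≤ Real.sin ((b:ℝ)*θ/2) := le_trans (by positivity) hs2lb
    have hs3nn : 0 ≤ Real.sin (((a:ℝ)*θ + (b:ℝ)*θ)/2) := le_trans hs.le hs3lb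
    -- compute the area
    have hcross : (P β - P α) 0 * (P γ - P α) 1 - (P β - P α) 1 * (P γ - P α) 0
        = R^2 * (4 * Real.sin ((a:ℝ)*θ/2) * Real.sin ((b:ℝ)*θ/2) * Real.sin (((a:ℝ)*θ + (b:ℝ)*θ)/2)) := by
      rw [hsub, hsub, hsub, hsub, hP0, hP0, hP1, hP1, hP0, hP1]
      have e1 : (R*Real.cos β - R*Real.cos α) * (R*Real.sin γ - R*Real.sin α)
          - (R*Real.sin β - R*Real.sin α) * (R*Real.cos γ - R*Real.cos α)
          = R^2 * ((Real.cos β - Real.cos α)*(Real.sin γ - Real.sin α)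
              - (Real.sin β - Real.sin α)*(Real.cos γ - Real.cos α)) := by ring
      rw [e1, crossid, hγβ, hβα, hγα]
      have e2 := tri_sin ((a:ℝ)*θ) ((b:ℝ)*θ)
      linear_combination R^2 * e2
    have harea : triArea (P α) (P β) (P γ) = (1/2) * (R^2 * (4 * Real.sin ((a:ℝ)*θ/2) * Real.sin ((b:ℝ)*θ/2) * Real.sin (((a:ℝ)*θ + (b:ℝ)*θ)/2))) := by
      unfold triArea
      rw [gram, hcross, Real.sqrt_sq (by positivity)]
    -- final chain
    have hmm : (a:ℝ)/m * ((b:ℝ)/m) * Real.sin (θ/2) ≤ Real.sin ((a:ℝ)*θ/2) * Real.sin ((b:ℝ)*θ/2) * Real.sin (((a:ℝ)*θ + (b:ℝ)*θ)/2) := by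
      apply mul_le_mul (mul_le_mul hs1lb hs2lb (by positivity) hs1nn) hs3lb hs.le
        (mul_nonneg hs1nn hs2nn)
    have hR4 : (m:ℝ) ≤ 4 * R := by
      have hsl : Real.sin (θ/2) ≤ θ/2 := le_of_lt (Real.sin_lt hθ2pos)
      have h1 : (1:ℝ) ≤ R * θ := by nlinarith
      have h2 : (m:ℝ) * (R*θ) = R * π := by rw [← hmθ]; ring
      have h3 := mul_le_mul_of_nonneg_left h1 hm0.le
      have h4 := mul_le_mul_of_nonneg_left Real.pi_le_four hR.le
      nlinarith
    have hfin : (a:ℝ)*(b:ℝ)/(2*2*m) ≤ (1/2) * (R^2 * (4 * Real.sin ((a:ℝ)*θ/2) * Real.sin ((b:ℝ)*θ/2) * Real.sin (((a:ℝ)*θ + (b:ℝ)*θ)/2))) := by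
      have e2 : (1/2)*(R^2*(4*((a:ℝ)/m * ((b:ℝ)/m) * Real.sin (θ/2)))) = R*((a:ℝ)*(b:ℝ))/m^2 := by
        have hmne : (m:ℝ) ≠ 0 := ne_of_gt hm0
        rw [show (1/2)*(R^2*(4*((a:ℝ)/m * ((b:ℝ)/m) * Real.sin (θ/2)))) = (2*R*Real.sin (θ/2)) * (R*((a:ℝ)*(b:ℝ))/m^2) by ring, hRs, one_mul]
      have h1 : (a:ℝ)*(b:ℝ)/(2*2*m) ≤ R*((a:ℝ)*(b:ℝ))/m^2 := by
        rw [div_le_div_iff₀ (by positivity) (by positivity)]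
        nlinarith [mul_le_mul_of_nonneg_right hR4 (show (0:ℝ) ≤ (a:ℝ)*(b:ℝ)*(m:ℝ) by positivity)]
      nlinarith [mul_le_mul_of_nonneg_left hmm (show (0:ℝ) ≤ (1/2)*(R^2*4) by positivity)]
    rw [ge_iff_le, ← haR, ← hbR]
    calc ((a:ℕ):ℝ) * ((b:ℕ):ℝ) / (2*2*(m:ℝ)) ≤ (1/2) * (R^2 * (4 * Real.sin ((a:ℝ)*θ/2) * Real.sin ((b:ℝ)*θ/2) * Real.sin (((a:ℝ)*θ + (b:ℝ)*θ)/2))) := hfin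
      _ = triArea (P α) (P β) (P γ) := harea.symm
end

section
/- Let O be a point of EuclideanSpace ℝ (Fin 2), let R > 0, and let A, B, C be three pairwise distinct points on the circle of center O and radius R (dist(A,O) = dist(B,O) = dist(C,O) = R). Then Area(A,B,C) ≤ dist(A,B) · dist(B,C) · (dist(A,B) + dist(B,C)) / (4R). In particular, if dist(A,B) ≤ ℓ and dist(B,C) ≤ ℓ, then Area(A,B,C) ≤ dist(A,B)·dist(B,C)·ℓ/(2R), so the 3-distortion of the triangle ABC is at least R/ℓ. (Flattening claim underlying the remark that points taken on a fixed C² curve of minimal osculating radius r_Γ yield 3-distortion Ω(n): by the inscribed angle theorem, sin ∠ABC = dist(A,C)/(2R) ≤ (dist(A,B)+dist(B,C))/(2R).) -/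
private lemma dist_sq2 (X Y : EuclideanSpace ℝ (Fin 2)) :
    dist X Y ^ 2 = (X 0 - Y 0) ^ 2 + (X 1 - Y 1) ^ 2 := by
  rw [EuclideanSpace.dist_eq, Real.sq_sqrt (by positivity)]
  simp [Fin.sum_univ_two, Real.dist_eq, sq_abs]

set_option maxHeartbeats 4000000 in
theorem stmt_13 (O : EuclideanSpace ℝ (Fin 2)) (R : ℝ) (hR : 0 < R)
    (A B C : EuclideanSpace ℝ (Fin 2)) (hAB : A ≠ B) (hBC : B ≠ C) (hAC : A ≠ C)
    (hA : dist A O = R) (hB : dist B O = R) (hC : dist C O = R) :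
    triArea A B C ≤ dist A B * dist B C * (dist A B + dist B C) / (4 * R) ∧
      ∀ ℓ : ℝ, dist A B ≤ ℓ → dist B C ≤ ℓ →
        triArea A B C ≤ dist A B * dist B C * ℓ / (2 * R) := by
  have ha : (A 0 - O 0) ^ 2 + (A 1 - O 1) ^ 2 = R ^ 2 := by rw [← dist_sq2, hA]
  have hb : (B 0 - O 0) ^ 2 + (B 1 - O 1) ^ 2 = R ^ 2 := by rw [← dist_sq2, hB]
  have hc : (C 0 - O 0) ^ 2 + (C 1 - O 1) ^ 2 = R ^ 2 := by rw [← dist_sq2, hC]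
  set X : ℝ := (B 0 - A 0) * (C 1 - A 1) - (B 1 - A 1) * (C 0 - A 0) with hX
  have hS : ‖B - A‖ ^ 2 * ‖C - A‖ ^ 2 - (inner ℝ (B - A) (C - A) : ℝ) ^ 2 = X ^ 2 := by
    rw [hX, @norm_sq_eq_re_inner ℝ, @norm_sq_eq_re_inner ℝ]
    simp only [PiLp.inner_apply, RCLike.inner_apply, conj_trivial, Fin.sum_univ_two,
      PiLp.sub_apply, RCLike.re_to_real]
    ring
  have hTA : triArea A B C = |X| / 2 := by
    rw [triArea, hS, Real.sqrt_sq_eq_abs]; ring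
  have hMain : dist A B ^ 2 * dist A C ^ 2 * dist B C ^ 2 = 4 * R ^ 2 * X ^ 2 := by
    rw [dist_sq2, dist_sq2, dist_sq2, hX]
    linear_combination ((4)*(C 1 - O 1)^2*R^2 + (-1)*(C 1 - O 1)^4 + (2)*(B 1 - O 1)*(C 1 - O 1)^3 + (4)*(B 1 - O 1)^2*R^2 + (-9)*(B 1 - O 1)^2*(C 1 - O 1)^2 + (-8)*(A 1 - O 1)*(C 1 - O 1)*R^2 + (2)*(A 1 - O 1)*(C 1 - O 1)^3 + (-8)*(A 1 - O 1)*(B 1 - O 1)*R^2 + (8)*(A 1 - O 1)*(B 1 - O 1)*(C 1 - O 1)^2 + (6)*(A 1 - O 1)*(B 1 - O 1)^2*(C 1 - O 1) + (8)*(A 1 - O 1)^2*R^2 + (-5)*(A 1 - O 1)^2*(C 1 - O 1)^2 + (-2)*(A 1 - O 1)^2*(B 1 - O 1)*(C 1 - O 1) + (-1)*(A 1 - O 1)^2*(B 1 - O 1)^2 + (3)*(A 0 - O 0)^2*(C 1 - O 1)^2 + (-2)*(A 0 - O 0)^2*(B 1 - O 1)*(C 1 - O 1) + (-1)*(A 0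 - O 0)^2*(B 1 - O 1)^2 + (-2)*(C 0 - O 0)*(A 0 - O 0)*(C 1 - O 1)^2 + (4)*(C 0 - O 0)*(A 0 - O 0)*(B 1 - O 1)*(C 1 - O 1) + (-2)*(C 0 - O 0)*(A 0 - O 0)*(B 1 - O 1)^2 + (-2)*(C 0 - O 0)^2*(C 1 - O 1)^2 + (2)*(C 0 - O 0)^2*(B 1 - O 1)*(C 1 - O 1) + (-1)*(C 0 - O 0)^2*(B 1 - O 1)^2 + (2)*(C 0 - O 0)^2*(A 1 - O 1)*(C 1 - O 1) + (4)*(C 0 - O 0)^2*(A 1 - O 1)*(B 1 - O 1) + (-5)*(C 0 - O 0)^2*(A 1 - O 1)^2 + (3)*(C 0 - O 0)^2*(A 0 - O 0)^2 + (-2)*(C 0 - O 0)^3*(A 0 - O 0) + (-1)*(C 0 - O 0)^4 + (-4)*(B 0 - O 0)*(A 0 - O 0)*(C 1 - O 1)^2 + (4)*(B 0 - O 0)*(A 0 - O 0)*(B 1 - O 1)*(C 1 - O 1) + (2)*(B 0 - O 0)*(C 0 - O 0)*(C 1 - O 1)^2 + (-8)*(B 0 - O 0)*(C 0 - O 0)*(B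 1 - O 1)*(C 1 - O 1) + (4)*(B 0 - O 0)*(C 0 - O 0)*(A 1 - O 1)*(C 1 - O 1) + (4)*(B 0 - O 0)*(C 0 - O 0)*(A 1 - O 1)*(B 1 - O 1) + (-2)*(B 0 - O 0)*(C 0 - O 0)*(A 1 - O 1)^2 + (-2)*(B 0 - O 0)*(C 0 - O 0)*(A 0 - O 0)^2 + (2)*(B 0 - O 0)*(C 0 - O 0)^3 + (-1)*(B 0 - O 0)^2*(C 1 - O 1)^2 + (2)*(B 0 - O 0)^2*(A 1 - O 1)*(C 1 - O 1) + (-1)*(B 0 - O 0)^2*(A 1 - O 1)^2 + (-1)*(B 0 - O 0)^2*(A 0 - O 0)^2 + (2)*(B 0 - O 0)^2*(C 0 - O 0)*(A 0 - O 0) + (-1)*(B 0 - O 0)^2*(C 0 - O 0)^2) * ha + ((-4)*(C 1 - O 1)^2*R^2 + (1)*(C 1 - O 1)^4 + (-2)*(B 1 - O 1)*(C 1 - O 1)^3 + (1)*(B 1 - O 1)^2*(C 1 - O 1)^2 + (8)*(A 1 - O 1)*(C 1 - O 1)*R^2 + (-2)*(A 1 - O 1)*(C 1 - O 1)^3 +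 (2)*(A 1 - O 1)*(B 1 - O 1)*(C 1 - O 1)^2 + (-2)*(A 1 - O 1)*(B 1 - O 1)^2*(C 1 - O 1) + (-4)*(A 1 - O 1)^2*R^2 + (3)*(A 1 - O 1)^2*(C 1 - O 1)^2 + (2)*(A 1 - O 1)^2*(B 1 - O 1)*(C 1 - O 1) + (1)*(A 1 - O 1)^2*(B 1 - O 1)^2 + (-4)*(A 1 - O 1)^3*(C 1 - O 1) + (-2)*(A 1 - O 1)^3*(B 1 - O 1) + (2)*(A 1 - O 1)^4 + (3)*(A 0 - O 0)^2*(C 1 - O 1)^2 + (-2)*(A 0 - O 0)^2*(B 1 - O 1)*(C 1 - O 1) + (1)*(A 0 - O 0)^2*(B 1 - O 1)^2 + (-4)*(A 0 - O 0)^2*(A 1 - O 1)*(C 1 - O 1) + (-2)*(A 0 - O 0)^2*(A 1 - O 1)*(B 1 - O 1) + (4)*(A 0 - O 0)^2*(A 1 - O 1)^2 + (2)*(A 0 - O 0)^4 + (2)*(C 0 - O 0)*(A 0 - O 0)*(C 1 - O 1)^2 + (4)*(C 0 - O 0)*(A 0 - O 0)*(B 1 - O 1)*(C 1 - O 1) +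 (-2)*(C 0 - O 0)*(A 0 - O 0)*(B 1 - O 1)^2 + (-8)*(C 0 - O 0)*(A 0 - O 0)*(A 1 - O 1)*(C 1 - O 1) + (4)*(C 0 - O 0)*(A 0 - O 0)*(A 1 - O 1)*(B 1 - O 1) + (2)*(C 0 - O 0)^2*(C 1 - O 1)^2 + (-2)*(C 0 - O 0)^2*(B 1 - O 1)*(C 1 - O 1) + (1)*(C 0 - O 0)^2*(B 1 - O 1)^2 + (-2)*(C 0 - O 0)^2*(A 1 - O 1)*(C 1 - O 1) + (-2)*(C 0 - O 0)^2*(A 1 - O 1)*(B 1 - O 1) + (3)*(C 0 - O 0)^2*(A 1 - O 1)^2 + (-5)*(C 0 - O 0)^2*(A 0 - O 0)^2 + (2)*(C 0 - O 0)^3*(A 0 - O 0) + (1)*(C 0 - O 0)^4 + (-2)*(B 0 - O 0)*(A 0 - O 0)*(C 1 - O 1)^2 + (4)*(B 0 - O 0)*(A 0 - O 0)*(A 1 - O 1)*(C 1 - O 1) + (-2)*(B 0 - O 0)*(A 0 - O 0)*(A 1 - O 1)^2 + (-2)*(B 0 - O 0)*(A 0 - O 0)^3 + (-2)*(B 0 -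 O 0)*(C 0 - O 0)*(C 1 - O 1)^2 + (4)*(B 0 - O 0)*(C 0 - O 0)*(A 1 - O 1)*(C 1 - O 1) + (-2)*(B 0 - O 0)*(C 0 - O 0)*(A 1 - O 1)^2 + (2)*(B 0 - O 0)*(C 0 - O 0)*(A 0 - O 0)^2 + (2)*(B 0 - O 0)*(C 0 - O 0)^2*(A 0 - O 0) + (-2)*(B 0 - O 0)*(C 0 - O 0)^3 + (1)*(B 0 - O 0)^2*(C 1 - O 1)^2 + (-2)*(B 0 - O 0)^2*(A 1 - O 1)*(C 1 - O 1) + (1)*(B 0 - O 0)^2*(A 1 - O 1)^2 + (1)*(B 0 - O 0)^2*(A 0 - O 0)^2 + (-2)*(B 0 - O 0)^2*(C 0 - O 0)*(A 0 - O 0) + (1)*(B 0 - O 0)^2*(C 0 - O 0)^2) * hb + ((-4)*(B 1 - O 1)^2*R^2 + (8)*(A 1 - O 1)*(B 1 - O 1)*R^2 + (-2)*(A 1 - O 1)*(B 1 - O 1)*(C 1 - O 1)^2 + (4)*(A 1 - O 1)*(B 1 - O 1)^2*(C 1 - O 1) + (-4)*(A 1 - O 1)^2*R^2 + (2)*(A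 1 - O 1)^2*(C 1 - O 1)^2 + (-4)*(A 1 - O 1)^3*(C 1 - O 1) + (-6)*(A 1 - O 1)^3*(B 1 - O 1) + (6)*(A 1 - O 1)^4 + (2)*(A 0 - O 0)^2*(C 1 - O 1)^2 + (-4)*(A 0 - O 0)^2*(B 1 - O 1)*(C 1 - O 1) + (8)*(A 0 - O 0)^2*(B 1 - O 1)^2 + (-4)*(A 0 - O 0)^2*(A 1 - O 1)*(C 1 - O 1) + (-6)*(A 0 - O 0)^2*(A 1 - O 1)*(B 1 - O 1) + (4)*(A 0 - O 0)^2*(A 1 - O 1)^2 + (-2)*(A 0 - O 0)^4 + (-4)*(C 0 - O 0)*(A 0 - O 0)*(B 1 - O 1)^2 + (4)*(C 0 - O 0)*(A 0 - O 0)*(A 1 - O 1)*(B 1 - O 1) + (-2)*(C 0 - O 0)^2*(A 1 - O 1)*(B 1 - O 1) + (2)*(C 0 - O 0)^2*(A 1 - O 1)^2 + (2)*(C 0 - O 0)^2*(A 0 - O 0)^2 + (-2)*(B 0 - O 0)*(A 0 - O 0)*(C 1 - O 1)^2 + (4)*(B 0 - O 0)*(A 0 - O 0)*(B 1 - O 1)*(C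 1 - O 1) + (4)*(B 0 - O 0)*(A 0 - O 0)*(A 1 - O 1)*(C 1 - O 1) + (-8)*(B 0 - O 0)*(A 0 - O 0)*(A 1 - O 1)*(B 1 - O 1) + (2)*(B 0 - O 0)*(A 0 - O 0)*(A 1 - O 1)^2 + (2)*(B 0 - O 0)*(A 0 - O 0)^3 + (4)*(B 0 - O 0)*(C 0 - O 0)*(A 1 - O 1)*(B 1 - O 1) + (-4)*(B 0 - O 0)*(C 0 - O 0)*(A 1 - O 1)^2 + (-2)*(B 0 - O 0)*(C 0 - O 0)^2*(A 0 - O 0)) * hc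
  have habc : dist A B * dist A C * dist B C = 2 * R * |X| := by
    have h1 : (dist A B * dist A C * dist B C) ^ 2 = (2 * R * |X|) ^ 2 := by
      rw [mul_pow, mul_pow, mul_pow, mul_pow, sq_abs]
      linarith [hMain]
    have h2 : (0:ℝ) ≤ dist A B * dist A C * dist B C := by positivity
    have h3 : (0:ℝ) ≤ 2 * R * |X| := by positivity
    nlinarith [h1, h2, h3]
  have hval : triArea A B C = dist A B * dist A C * dist B C / (4 * R) := by
    rw [hTA, habc]; field_simp; ring
  have htri : dist A C ≤ dist A B + dist B C := dist_triangle A B C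
  constructor
  · rw [hval]
    have hle : dist A B * dist A C * dist B C ≤ dist A B * dist B C * (dist A B + dist B C) := by
      calc dist A B * dist A C * dist B C = dist A B * dist B C * dist A C := by ring
        _ ≤ dist A B * dist B C * (dist A B + dist B C) := by gcongr
    gcongr ?_ / (4 * R)
  · intro l h1 h2
    rw [hval]
    have hAC2 : dist A C ≤ 2 * l := by linarith
    have h0 : (0:ℝ) ≤ dist A B := dist_nonneg
    have h0' : (0:ℝ) ≤ dist B C := dist_nonneg
    calc dist A B * dist A C * dist B C / (4 * R)
        ≤ dist A B * (2 * l) * dist B C / (4 * R) := by gcongr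
      _ = dist A B * dist B C * l / (2 * R) := by field_simp; ring
end
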